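/- arXiv:2402.07137 — 4 statements merged into one kernel-verified Lean document; each statement's English description precedes it below -/
import Mathlib

section
/- Let p be a polynomial of degree at least 2. Then Σp contains no nontrivial translation, and there exists a point ξ(p) ∈ ℂ such that every element of Σp is a rotation about ξ(p); that is, every σ ∈ Σp has the form σ(z) = a(z − ξ(p)) + ξ(p) for some a with |a| = 1. -/
open Polynomial OnePoint

noncomputable section

/-- The Riemann sphere, modelled as the one-point compactification of `ℂ`. -/
abbrev RSphere : Type := OnePoint ℂ

/-- The finite part of a point of the Riemann sphere (junk value `0` at `∞`). -/
def toFin : RSphere → ℂ := fun x => match x with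
  | (∞ : RSphere) => 0
  | (z : ℂ) => z

/-- The chordal distance on the Riemann sphere. -/
def chordalDist : RSphere → RSphere → ℝ := fun x y =>
  match x, y with
  | (∞ : RSphere), (∞ : RSphere) => 0
  | (∞ : RSphere), (w : ℂ) => 2 / Real.sqrt (1 + ‖w‖ ^ 2)
  | (z : ℂ), (∞ : RSphere) => 2 / Real.sqrt (1 + ‖z‖ ^ 2)
  | (z : ℂ), (w : ℂ) =>
      2 * ‖z - w‖ /
        (Real.sqrt (1 + ‖z‖ ^ 2) * Real.sqrt (1 + ‖w‖ ^ 2))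

/-- The Fatou set of a self-map of the Riemann sphere: the set of points at which the
family of iterates is equicontinuous with respect to the chordal metric.  It is the largest
open set on which the iterates are equicontinuous. -/
def FatouSet (R : RSphere → RSphere) : Set RSphere :=
  {x | ∀ ε : ℝ, 0 < ε → ∃ V ∈ nhds x, ∀ y ∈ V, ∀ n : ℕ, chordalDist (R^[n] x) (R^[n] y) < ε}

/-- The Julia set: the complement of the Fatou set. -/
def JuliaSet (R : RSphere → RSphere) : Set RSphere :=
  (FatouSet R)ᶜ

/-- A polynomial regarded as a self-map of the Riemann sphere fixing `∞`. -/
def polySphere (p : Polynomial ℂ) : RSphere → RSphere := fun x =>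
  match x with
  | (∞ : RSphere) => ∞
  | (z : ℂ) => ((p.eval z : ℂ) : RSphere)

/-- The affine map `z ↦ a z + b` extended to the Riemann sphere by `∞ ↦ ∞`. -/
def affineSphere (a b : ℂ) : RSphere → RSphere := fun x =>
  match x with
  | (∞ : RSphere) => ∞
  | (z : ℂ) => ((a * z + b : ℂ) : RSphere)

/-- The rational map `P/Q` as a self-map of the Riemann sphere (intended for a
representation `P/Q` in lowest terms). -/
def ratSphere (P Q : Polynomial ℂ) : RSphere → RSphere := fun x =>
  match x with
  | (∞ : RSphere) =>
      if P.natDegree > Q.natDegree then ∞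
      else ((P.leadingCoeff / Q.leadingCoeff : ℂ) : RSphere)
  | (z : ℂ) =>
      if Q.eval z = 0 then ∞ else ((P.eval z / Q.eval z : ℂ) : RSphere)

/-- The Möbius transformation `z ↦ (az+b)/(cz+d)` as a self-map of the Riemann sphere
(intended for `ad - bc ≠ 0`). -/
def mobiusSphere (a b c d : ℂ) : RSphere → RSphere := fun x =>
  match x with
  | (∞ : RSphere) => if c = 0 then ∞ else ((a / c : ℂ) : RSphere)
  | (z : ℂ) => if c * z + d = 0 then ∞ else (((a * z + b) / (c * z + d) : ℂ) : RSphere)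

/-- The inversion `z ↦ 1/z` on the Riemann sphere. -/
def invSphere : RSphere → RSphere := fun x =>
  match x with
  | (∞ : RSphere) => ((0 : ℂ) : RSphere)
  | (z : ℂ) => if z = 0 then ∞ else ((z⁻¹ : ℂ) : RSphere)

/-- `Σ R`: the group of rotations `z ↦ az + b` (`|a| = 1`, `a ≠ 1`, extended by `∞ ↦ ∞`)
preserving the Julia set of `R`, together with the identity. -/
def SigmaGroup (R : RSphere → RSphere) : Set (RSphere → RSphere) :=
  {σ | σ = id ∨ ∃ a b : ℂ, ‖a‖ = 1 ∧ a ≠ 1 ∧ σ = affineSphere a b ∧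
        affineSphere a b '' JuliaSet R = JuliaSet R}

/-- `U` is a Fatou component of `R`: a connected component of the Fatou set. -/
def IsFatouComponent (R : RSphere → RSphere) (U : Set RSphere) : Prop :=
  U.Nonempty ∧ IsOpen U ∧ IsPreconnected U ∧ U ⊆ FatouSet R ∧
    ∀ V : Set RSphere, IsPreconnected V → V ⊆ FatouSet R → U ⊆ V → V = U

/-- The multiplier of `R^[k]` at a fixed point `x` of `R^[k]` equals `lam`
(using the chart `w ↦ 1/w` at `∞`). -/
def MultiplierEq (R : RSphere → RSphere) (k : ℕ) (x : RSphere) (lam : ℂ) : Prop :=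
  (∃ z₀ : ℂ, x = (z₀ : RSphere) ∧ HasDerivAt (fun z : ℂ => toFin (R^[k] (z : RSphere))) lam z₀) ∨
  (x = (∞ : RSphere) ∧
    HasDerivAt (fun w : ℂ => toFin (invSphere (R^[k] (invSphere (w : RSphere))))) lam 0)

/-- `R` has a parabolic domain: a `k`-periodic Fatou component whose boundary contains a
`k`-periodic point whose multiplier is a root of unity. -/
def HasParabolicDomain (R : RSphere → RSphere) : Prop :=
  ∃ (U : Set RSphere) (k : ℕ), 0 < k ∧ IsFatouComponent R U ∧ R^[k] '' U ⊆ U ∧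
    ∃ x ∈ frontier U, R^[k] x = x ∧
      ∃ lam : ℂ, (∃ m : ℕ, 0 < m ∧ lam ^ m = 1) ∧ MultiplierEq R k x lam

/-- `R` has a rotation domain (Siegel disc or Herman ring): a `k`-periodic Fatou component
on which `R^[k]` is a bijection. -/
def HasRotationDomain (R : RSphere → RSphere) : Prop :=
  ∃ (U : Set RSphere) (k : ℕ), 0 < k ∧ IsFatouComponent R U ∧ Set.BijOn (R^[k]) U U

/-- A rational map is exceptional if its Julia set is the whole sphere, a circle in the
sphere, or a closed arc of such a circle (circles in the sphere being Möbius images of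
the unit circle). -/
def ExceptionalMap (R : RSphere → RSphere) : Prop :=
  JuliaSet R = Set.univ ∨
    ∃ a b c d : ℂ, a * d - b * c ≠ 0 ∧ ∃ θ₁ θ₂ : ℝ,
      JuliaSet R =
        mobiusSphere a b c d ''
          ((fun θ : ℝ => ((Complex.exp (θ * Complex.I) : ℂ) : RSphere)) '' Set.Icc θ₁ θ₂)

/-- `L_p(z) = p(z)p''(z)/p'(z)²`. -/
def Lfun (p : Polynomial ℂ) (z : ℂ) : ℂ :=
  p.eval z * (derivative (derivative p)).eval z / (p.derivative.eval z) ^ 2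

/-- The Chebyshev method `C_p(z) = z - (1 + L_p(z)/2) p(z)/p'(z)` (as a map on `ℂ`). -/
def Cfun (p : Polynomial ℂ) (z : ℂ) : ℂ :=
  z - (1 + Lfun p z / 2) * (p.eval z / p.derivative.eval z)

/-- The Chebyshev method of `p` as a rational self-map of the Riemann sphere:
`C_p = (2 z p'³ - 2 p p'² - p² p'') / (2 p'³)`. -/
def ChebSphere (p : Polynomial ℂ) : RSphere → RSphere :=
  ratSphere (C 2 * X * (derivative p) ^ 3 - C 2 * p * (derivative p) ^ 2
      - p ^ 2 * derivative (derivative p))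
    (C 2 * (derivative p) ^ 3)


/-! ### Auxiliary lemmas -/

lemma chordal_coe_coe' (z w : ℂ) : chordalDist (z : RSphere) (w : RSphere) =
    2 * ‖z - w‖ /
      (Real.sqrt (1 + ‖z‖ ^ 2) * Real.sqrt (1 + ‖w‖ ^ 2)) := rfl

lemma ch_one_le (a : ℝ) : 1 ≤ Real.sqrt (1 + a ^ 2) := by
  nlinarith [Real.sq_sqrt (show (0:ℝ) ≤ 1 + a^2 by positivity), Real.sqrt_nonneg (1 + a^2)]

lemma ch_le (a : ℝ) (ha : 0 ≤ a) : a ≤ Real.sqrt (1 + a ^ 2) := by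
  nlinarith [Real.sq_sqrt (show (0:ℝ) ≤ 1 + a^2 by positivity), Real.sqrt_nonneg (1 + a^2)]

lemma ch_ub (a : ℝ) (ha : 0 ≤ a) : Real.sqrt (1 + a ^ 2) ≤ 1 + a := by
  nlinarith [Real.sq_sqrt (show (0:ℝ) ≤ 1 + a^2 by positivity), Real.sqrt_nonneg (1 + a^2)]

lemma chordal_le_two_mul (z w : ℂ) :
    chordalDist (z : RSphere) (w : RSphere) ≤ 2 * ‖z - w‖ := by
  rw [chordal_coe_coe']
  have h1 := ch_one_le (‖z‖)
  have h2 := ch_one_le (‖w‖)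
  have hAB : (1:ℝ) ≤ Real.sqrt (1 + ‖z‖ ^ 2) * Real.sqrt (1 + ‖w‖ ^ 2) := by
    nlinarith
  exact div_le_self (by positivity) hAB

lemma chordal_le_inv_add (z w : ℂ) (hz : 0 < ‖z‖) (hw : 0 < ‖w‖) :
    chordalDist (z : RSphere) (w : RSphere) ≤ 2 / ‖z‖ + 2 / ‖w‖ := by
  rw [chordal_coe_coe']
  set A := Real.sqrt (1 + ‖z‖ ^ 2) with hA
  set B := Real.sqrt (1 + ‖w‖ ^ 2) with hB
  have hA1 : (1:ℝ) ≤ A := ch_one_le _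
  have hB1 : (1:ℝ) ≤ B := ch_one_le _
  have hzA : ‖z‖ ≤ A := ch_le _ (norm_nonneg z)
  have hwB : ‖w‖ ≤ B := ch_le _ (norm_nonneg w)
  have h1 : ‖z - w‖ ≤ ‖z‖ + ‖w‖ := by
    have := norm_sub_le z w
    simpa using this
  have e1 : 2 * ‖z‖ / (A * B) ≤ 2 / ‖w‖ := by
    calc 2 * ‖z‖ / (A * B) ≤ 2 * A / (A * B) := by gcongr
      _ = 2 / B := by field_simp
      _ ≤ 2 / ‖w‖ := by gcongr
  have e2 : 2 * ‖w‖ / (A * B) ≤ 2 / ‖z‖ := by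
    calc 2 * ‖w‖ / (A * B) ≤ 2 * B / (A * B) := by gcongr
      _ = 2 / A := by field_simp
      _ ≤ 2 / ‖z‖ := by gcongr
  calc 2 * ‖z - w‖ / (A * B)
      ≤ (2 * ‖z‖ + 2 * ‖w‖) / (A * B) := by gcongr; linarith
    _ = 2 * ‖z‖ / (A * B) + 2 * ‖w‖ / (A * B) := by ring
    _ ≤ 2 / ‖w‖ + 2 / ‖z‖ := add_le_add e1 e2
    _ = 2 / ‖z‖ + 2 / ‖w‖ := by ring

lemma chordal_lower (R : ℝ) (hR : 1 ≤ R) (z w : ℂ) (hz : ‖z‖ ≤ R)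
    (hw : 2 * R ≤ ‖w‖) :
    1 / (2 * (1 + R)) ≤ chordalDist (z : RSphere) (w : RSphere) := by
  rw [chordal_coe_coe']
  set A := Real.sqrt (1 + ‖z‖ ^ 2) with hA
  set B := Real.sqrt (1 + ‖w‖ ^ 2) with hB
  have hApos : 0 < A := lt_of_lt_of_le one_pos (ch_one_le _)
  have hBpos : 0 < B := lt_of_lt_of_le one_pos (ch_one_le _)
  have hAle : A ≤ 1 + R := le_trans (ch_ub _ (norm_nonneg z)) (by linarith)
  have hwpos : (1:ℝ) ≤ ‖w‖ := by linarith
  have hBle : B ≤ 2 * ‖w‖ := by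
    have h1 : B ≤ 1 + ‖w‖ := ch_ub _ (norm_nonneg w)
    linarith
  have hnum : ‖w‖ - R ≤ ‖z - w‖ := by
    have h0 : ‖w‖ - ‖z‖ ≤ ‖w - z‖ := norm_sub_norm_le w z
    rw [norm_sub_rev] at h0
    linarith
  have key : ‖w‖ / 2 ≤ ‖z - w‖ := by linarith
  calc (1:ℝ) / (2 * (1 + R)) = 2 * (‖w‖ / 2) / ((1+R) * (2 * ‖w‖)) := by
        field_simp
    _ ≤ 2 * ‖z - w‖ / ((1+R) * (2 * ‖w‖)) := by gcongr
    _ ≤ 2 * ‖z - w‖ / (A * B) := by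
        have hd : A * B ≤ (1+R) * (2 * ‖w‖) :=
          mul_le_mul hAle hBle hBpos.le (by linarith)
        gcongr

lemma escape_radius (p : Polynomial ℂ) (hdeg : 2 ≤ p.natDegree) :
    ∃ R : ℝ, 1 ≤ R ∧ ∀ z : ℂ, R ≤ ‖z‖ → 2 * ‖z‖ ≤ ‖p.eval z‖ := by
  have hp0 : p ≠ 0 := fun h => by rw [h] at hdeg; simp at hdeg
  set n := p.natDegree with hn
  set L : ℝ := ‖p.coeff n‖ with hL
  have hLpos : 0 < L := norm_pos_iff.mpr (Polynomial.leadingCoeff_ne_zero.mpr hp0)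
  set C : ℝ := ∑ i ∈ Finset.range n, ‖p.coeff i‖ with hC
  have hC0 : 0 ≤ C := Finset.sum_nonneg fun i _ => norm_nonneg _
  refine ⟨max 1 ((C + 2) / L), le_max_left _ _, fun z hz => ?_⟩
  have hz1 : (1:ℝ) ≤ ‖z‖ := le_trans (le_max_left _ _) hz
  have hz2 : (C + 2) / L ≤ ‖z‖ := le_trans (le_max_right _ _) hz
  have hzC : C + 2 ≤ L * ‖z‖ := by
    rw [div_le_iff₀ hLpos] at hz2; linarith [hz2]
  have heval : p.eval z = p.coeff n * z ^ n + ∑ i ∈ Finset.range n, p.coeff i * z ^ i := by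
    conv_lhs => rw [Polynomial.eval_eq_sum_range, Finset.sum_range_succ]
    ring
  have htail : ‖∑ i ∈ Finset.range n, p.coeff i * z ^ i‖
      ≤ C * ‖z‖ ^ (n - 1) := by
    calc ‖∑ i ∈ Finset.range n, p.coeff i * z ^ i‖
        ≤ ∑ i ∈ Finset.range n, ‖p.coeff i * z ^ i‖ := by
          exact norm_sum_le _ _
      _ ≤ ∑ i ∈ Finset.range n, ‖p.coeff i‖ * ‖z‖ ^ (n - 1) := by
          apply Finset.sum_le_sum
          intro i hi
          rw [norm_mul, norm_pow]
          apply mul_le_mul_of_nonneg_left _ (norm_nonneg _)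
          exact pow_le_pow_right₀ hz1 (by have := Finset.mem_range.mp hi; omega)
      _ = C * ‖z‖ ^ (n - 1) := by rw [hC, Finset.sum_mul]
  have hlead : ‖p.coeff n * z ^ n‖ = L * ‖z‖ ^ n := by
    rw [norm_mul, norm_pow]
  have hmain : L * ‖z‖ ^ n - C * ‖z‖ ^ (n-1) ≤ ‖p.eval z‖ := by
    rw [heval]
    calc L * ‖z‖ ^ n - C * ‖z‖ ^ (n-1)
        ≤ ‖p.coeff n * z ^ n‖ - ‖∑ i ∈ Finset.range n, p.coeff i * z ^ i‖ := by
          rw [hlead]; linarith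
      _ ≤ ‖p.coeff n * z ^ n + ∑ i ∈ Finset.range n, p.coeff i * z ^ i‖ := by
          have h3 := norm_sub_norm_le (p.coeff n * z ^ n) (-(∑ i ∈ Finset.range n, p.coeff i * z ^ i))
          simp only [norm_neg, sub_neg_eq_add] at h3
          linarith
  have hpow : ‖z‖ ^ n = ‖z‖ ^ (n-1) * ‖z‖ := by
    rw [← pow_succ]
    congr 1
    omega
  have hself : ‖z‖ ≤ ‖z‖ ^ (n - 1) :=
    le_self_pow₀ hz1 (by omega)
  have h2 : 2 * ‖z‖ ^ (n-1) ≤ (L * ‖z‖ - C) * ‖z‖ ^ (n-1) := by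
    apply mul_le_mul_of_nonneg_right _ (by positivity)
    linarith
  calc 2 * ‖z‖ ≤ 2 * ‖z‖ ^ (n-1) := by linarith
    _ ≤ (L * ‖z‖ - C) * ‖z‖ ^ (n-1) := h2
    _ = L * ‖z‖ ^ n - C * ‖z‖ ^ (n-1) := by rw [hpow]; ring
    _ ≤ ‖p.eval z‖ := hmain

lemma polySphere_iterate (p : Polynomial ℂ) (n : ℕ) (z : ℂ) :
    (polySphere p)^[n] (z : RSphere) = (((fun w : ℂ => p.eval w)^[n] z : ℂ) : RSphere) := by
  induction n with
  | zero => rfl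
  | succ n ih =>
    rw [Function.iterate_succ_apply', Function.iterate_succ_apply', ih]
    rfl

lemma escape_iter (p : Polynomial ℂ) (R : ℝ) (hR1 : 1 ≤ R)
    (hR : ∀ z : ℂ, R ≤ ‖z‖ → 2 * ‖z‖ ≤ ‖p.eval z‖)
    (z : ℂ) (hz : R ≤ ‖z‖) (n : ℕ) :
    2 ^ n * ‖z‖ ≤ ‖(fun w : ℂ => p.eval w)^[n] z‖ := by
  induction n with
  | zero => simp
  | succ n ih =>
    have h1 : (1:ℝ) ≤ 2 ^ n := one_le_pow₀ (by norm_num)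
    have hzR : R ≤ ‖(fun w : ℂ => p.eval w)^[n] z‖ := by nlinarith
    rw [Function.iterate_succ_apply']
    have := hR _ hzR
    calc 2 ^ (n+1) * ‖z‖ = 2 * (2 ^ n * ‖z‖) := by ring
      _ ≤ 2 * ‖(fun w : ℂ => p.eval w)^[n] z‖ := by linarith
      _ ≤ _ := this


lemma div_bound_aux (eps R az ay : ℝ) (n N : ℕ) (hRpos : 0 < R)
    (hNe : 4 / (2 ^ N * R) < eps) (h2N : (2:ℝ) ^ N ≤ 2 ^ n)
    (hz : 2 ^ n * R ≤ az) (hy : 2 ^ n * R ≤ ay) : 2 / az + 2 / ay < eps := by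
  have hpn : (0:ℝ) < 2 ^ n * R := by positivity
  have s2 : 2 / az ≤ 2 / (2 ^ n * R) := div_le_div_of_nonneg_left (by norm_num) hpn hz
  have s3 : 2 / ay ≤ 2 / (2 ^ n * R) := div_le_div_of_nonneg_left (by norm_num) hpn hy
  have s4 : 4 / ((2:ℝ) ^ n * R) ≤ 4 / (2 ^ N * R) :=
    div_le_div_of_nonneg_left (by norm_num) (by positivity)
      (mul_le_mul_of_nonneg_right h2N hRpos.le)
  have : 2 / (2 ^ n * R) + 2 / (2 ^ n * R) = 4 / ((2:ℝ) ^ n * R) := by ring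
  linarith

set_option maxHeartbeats 1000000 in
lemma big_fatou (p : Polynomial ℂ) (R : ℝ) (hR1 : 1 ≤ R)
    (hR : ∀ z : ℂ, R ≤ ‖z‖ → 2 * ‖z‖ ≤ ‖p.eval z‖)
    (z : ℂ) (hz : R < ‖z‖) : (z : RSphere) ∈ FatouSet (polySphere p) := by
  set f : ℂ → ℂ := fun w => p.eval w with hf
  intro ε hε
  obtain ⟨N, hN⟩ : ∃ N : ℕ, 4 / (ε * R) < 2 ^ N := pow_unbounded_of_one_lt _ (by norm_num)
  have hRpos : (0:ℝ) < R := lt_of_lt_of_le one_pos hR1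
  have hNe : 4 / (2 ^ N * R) < ε := by
    rw [div_lt_iff₀ (by positivity)] at hN ⊢
    nlinarith [pow_pos (show (0:ℝ) < 2 by norm_num) N]
  set V0 : Set ℂ := {y | R < ‖y‖} ∩
    ⋂ n ∈ Finset.range N, f^[n] ⁻¹' Metric.ball (f^[n] z) (ε/2) with hV0
  have hV0open : IsOpen V0 := by
    apply IsOpen.inter
    · have : {y : ℂ | R < ‖y‖} = (fun y : ℂ => ‖y‖) ⁻¹' Set.Ioi R := rfl
      rw [this]
      exact isOpen_Ioi.preimage continuous_norm
    · apply isOpen_biInter_finset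
      intro n _
      exact Metric.isOpen_ball.preimage ((Polynomial.continuous p).iterate n)
  have hzV0 : z ∈ V0 := by
    constructor
    · exact hz
    · simp only [Set.mem_iInter]
      intro n _
      exact Metric.mem_ball_self (by linarith)
  refine ⟨(fun w : ℂ => (w : RSphere)) '' V0, ?_, ?_⟩
  · rw [OnePoint.nhds_coe_eq]
    exact Filter.image_mem_map (hV0open.mem_nhds hzV0)
  · rintro y' ⟨y, hy, rfl⟩ n
    rw [polySphere_iterate, polySphere_iterate]
    by_cases hn : n < N
    · have hmem : f^[n] y ∈ Metric.ball (f^[n] z) (ε/2) := by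
        have := hy.2
        simp only [Set.mem_iInter] at this
        exact this n (Finset.mem_range.mpr hn)
      rw [Metric.mem_ball, Complex.dist_eq] at hmem
      calc chordalDist (((f^[n] z : ℂ)) : RSphere) ((f^[n] y : ℂ) : RSphere)
          ≤ 2 * ‖f^[n] z - f^[n] y‖ := chordal_le_two_mul _ _
        _ = 2 * ‖f^[n] y - f^[n] z‖ := by
            rw [norm_sub_rev]
        _ < ε := by linarith
    · push_neg at hn
      have hz' := escape_iter p R hR1 hR z hz.le n
      have hy' := escape_iter p R hR1 hR y hy.1.le n
      rw [← hf] at hz' hy'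
      have h1n : (1:ℝ) ≤ 2 ^ n := one_le_pow₀ (by norm_num)
      have h2N : (2:ℝ) ^ N ≤ 2 ^ n := pow_le_pow_right₀ (by norm_num) hn
      have hpn : (0:ℝ) < 2 ^ n * R := by positivity
      have hzR : 2 ^ n * R ≤ ‖f^[n] z‖ := le_trans (by nlinarith) hz'
      have hyR : 2 ^ n * R ≤ ‖f^[n] y‖ := by
        refine le_trans ?_ hy'
        have := hy.1
        simp only [Set.mem_setOf_eq] at this
        nlinarith
      have hzpos : 0 < ‖f^[n] z‖ := lt_of_lt_of_le hpn hzR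
      have hypos : 0 < ‖f^[n] y‖ := lt_of_lt_of_le hpn hyR
      have step1 : chordalDist ((f^[n] z : ℂ) : RSphere) ((f^[n] y : ℂ) : RSphere)
          ≤ 2 / ‖f^[n] z‖ + 2 / ‖f^[n] y‖ :=
        chordal_le_inv_add _ _ hzpos hypos
      exact lt_of_le_of_lt step1
        (div_bound_aux ε R (‖f^[n] z‖) (‖f^[n] y‖) n N hRpos hNe h2N hzR hyR)

lemma finite_julia (p : Polynomial ℂ) (hdeg : 2 ≤ p.natDegree) (R : ℝ) (hR1 : 1 ≤ R)
    (hR : ∀ z : ℂ, R ≤ ‖z‖ → 2 * ‖z‖ ≤ ‖p.eval z‖) :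
    ∃ z₀ : ℂ, (z₀ : RSphere) ∈ JuliaSet (polySphere p) := by
  set f : ℂ → ℂ := fun w => p.eval w with hf
  -- a fixed point exists
  obtain ⟨α, hα⟩ : ∃ α : ℂ, p.eval α = α := by
    have hp0 : p ≠ 0 := fun h => by rw [h] at hdeg; simp at hdeg
    have hdX : (X : Polynomial ℂ).degree < p.degree := by
      rw [Polynomial.degree_X, Polynomial.degree_eq_natDegree hp0]
      exact_mod_cast lt_of_lt_of_le (by norm_num) hdeg
    have hdsub : (p - X).degree = p.degree := Polynomial.degree_sub_eq_left_of_degree_lt hdX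
    have hpos : 0 < (p - X).degree := by
      rw [hdsub, Polynomial.degree_eq_natDegree hp0]
      exact_mod_cast lt_of_lt_of_le (by norm_num) hdeg
    obtain ⟨α, hα⟩ := Complex.exists_root hpos
    refine ⟨α, ?_⟩
    have : p.eval α - α = 0 := by
      simpa [Polynomial.IsRoot, Polynomial.eval_sub, Polynomial.eval_X] using hα
    exact sub_eq_zero.mp this
  set K : Set ℂ := {w | ∀ n : ℕ, ‖f^[n] w‖ ≤ R} with hK
  have hKclosed : IsClosed K := by
    have hKeq : K = ⋂ n : ℕ, (fun w => ‖f^[n] w‖) ⁻¹' Set.Iic R := by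
      ext w
      simp [hK, Set.mem_iInter]
    rw [hKeq]
    refine isClosed_iInter fun n => IsClosed.preimage ?_ isClosed_Iic
    exact continuous_norm.comp ((Polynomial.continuous p).iterate n)
  have hαiter : ∀ n : ℕ, f^[n] α = α := fun n => Function.iterate_fixed hα n
  have hαR : ‖α‖ ≤ R := by
    by_contra hh
    push_neg at hh
    have := hR α hh.le
    rw [hα] at this
    nlinarith [norm_nonneg α]
  have hαK : α ∈ K := by
    intro n
    rw [hαiter n]
    exact hαR
  have hKuniv : K ≠ Set.univ := by
    intro h
    have hmem : ((R + 1 : ℝ) : ℂ) ∈ K := by rw [h]; trivial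
    have h0 := hmem 0
    simp only [Function.iterate_zero, id_eq] at h0
    rw [Complex.norm_real, Real.norm_eq_abs] at h0
    rw [abs_of_pos (by linarith)] at h0
    linarith
  have hfr : (frontier K).Nonempty := by
    by_contra h
    rw [Set.not_nonempty_iff_eq_empty] at h
    have hclopen : IsClopen K := isClopen_iff_frontier_eq_empty.mpr h
    rcases isClopen_iff.mp hclopen with h1 | h1
    · rw [h1] at hαK; exact hαK
    · exact hKuniv h1
  obtain ⟨z₀, hz₀⟩ := hfr
  have hz₀K : z₀ ∈ K := hKclosed.frontier_subset hz₀
  refine ⟨z₀, ?_⟩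
  intro hF
  obtain ⟨V, hV, hVd⟩ := hF (1 / (2 * (1 + R))) (by positivity)
  rw [OnePoint.nhds_coe_eq, Filter.mem_map] at hV
  have hnsub : ¬ ((fun w : ℂ => (w : RSphere)) ⁻¹' V ⊆ K) := by
    intro hsub
    have : z₀ ∈ interior K := mem_interior_iff_mem_nhds.mpr (Filter.mem_of_superset hV hsub)
    exact hz₀.2 this
  obtain ⟨y, hyV, hyK⟩ := Set.not_subset.mp hnsub
  simp only [hK, Set.mem_setOf_eq, not_forall, not_le] at hyK
  obtain ⟨n, hn⟩ := hyK
  have hstep : 2 * R ≤ ‖f^[n+1] y‖ := by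
    rw [Function.iterate_succ_apply']
    calc 2 * R ≤ 2 * ‖f^[n] y‖ := by linarith
      _ ≤ ‖p.eval (f^[n] y)‖ := hR _ hn.le
  have hz₀n : ‖f^[n+1] z₀‖ ≤ R := hz₀K (n+1)
  have hlow := chordal_lower R hR1 (f^[n+1] z₀) (f^[n+1] y) hz₀n hstep
  have hup := hVd (y : RSphere) hyV (n+1)
  rw [polySphere_iterate, polySphere_iterate] at hup
  rw [← hf] at hup
  linarith


lemma affine_comp (a b c d : ℂ) :
    affineSphere a b ∘ affineSphere c d = affineSphere (a*c) (a*d+b) := by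
  funext x
  induction x using OnePoint.rec with
  | infty => rfl
  | coe z =>
    show ((a * (c * z + d) + b : ℂ) : RSphere) = ((a * c * z + (a * d + b) : ℂ) : RSphere)
    congr 1
    ring

lemma affine_id : affineSphere 1 0 = id := by
  funext x
  induction x using OnePoint.rec with
  | infty => rfl
  | coe z =>
    show ((1 * z + 0 : ℂ) : RSphere) = (z : RSphere)
    congr 1
    ring

/-- For every polynomial `p` of degree at least `2`, no nontrivial
translation preserves the Julia set of `p` (so `Σp` contains no nontrivial translation),
and there is a point `ξ(p)` such that every element of `Σp` is a rotation about `ξ(p)`,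
i.e. has the form `z ↦ a(z - ξ) + ξ = a z + ξ(1-a)` with `|a| = 1`. -/
theorem sigmaGroup_rotations_about_common_point (p : Polynomial ℂ) (hdeg : 2 ≤ p.natDegree) :
    (∀ b : ℂ, b ≠ 0 →
      affineSphere 1 b '' JuliaSet (polySphere p) ≠ JuliaSet (polySphere p)) ∧
    ∃ ξ : ℂ, ∀ σ ∈ SigmaGroup (polySphere p),
      ∃ a : ℂ, ‖a‖ = 1 ∧ σ = affineSphere a (ξ * (1 - a)) := by
  obtain ⟨R, hR1, hR⟩ := escape_radius p hdeg
  set J := JuliaSet (polySphere p) with hJ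
  have hT : ∀ b : ℂ, b ≠ 0 → affineSphere 1 b '' J ≠ J := by
    intro b hb heq
    obtain ⟨z₀, hz₀⟩ := finite_julia p hdeg R hR1 hR
    have hfwd : ∀ z : ℂ, (z : RSphere) ∈ J → ((z + b : ℂ) : RSphere) ∈ J := by
      intro z hz
      rw [← heq]
      refine ⟨(z : RSphere), hz, ?_⟩
      show ((1 * z + b : ℂ) : RSphere) = ((z + b : ℂ) : RSphere)
      rw [one_mul]
    have hmulti : ∀ n : ℕ, ((z₀ + n * b : ℂ) : RSphere) ∈ J := by
      intro n
      induction n with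
      | zero => simpa using hz₀
      | succ n ih =>
        have h' := hfwd _ ih
        have he : (z₀ + n * b) + b = z₀ + ((n:ℕ)+1 : ℕ) * b := by push_cast; ring
        rwa [he] at h'
    obtain ⟨n, hnn⟩ := exists_nat_gt ((R + ‖z₀‖) / ‖b‖)
    have hbpos : 0 < ‖b‖ := norm_pos_iff.mpr hb
    have hgt : R < ‖z₀ + n * b‖ := by
      have h0 := norm_sub_norm_le ((n:ℂ) * b) (-z₀)
      simp only [norm_neg, sub_neg_eq_add] at h0
      have h1 : ‖(n:ℂ) * b‖ - ‖z₀‖ ≤ ‖z₀ + n * b‖ := by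
        rw [add_comm]
        exact h0
      have h2 : ‖(n:ℂ) * b‖ = n * ‖b‖ := by
        rw [norm_mul, Complex.norm_natCast]
      have h3 : R + ‖z₀‖ < n * ‖b‖ := by
        rw [div_lt_iff₀ hbpos] at hnn
        linarith
      linarith
    have hFa := big_fatou p R hR1 hR _ hgt
    exact (hmulti n) hFa
  refine ⟨hT, ?_⟩
  have himage : ∀ a b : ℂ, a ≠ 0 → affineSphere a b '' J = J →
      ∀ b' : ℂ, affineSphere a b' '' J = J → b = b' := by
    intro a b ha0 h1 b' h2
    have hinv : affineSphere a⁻¹ (-(b'/a)) '' J = J := by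
      conv_lhs => rw [← h2, ← Set.image_comp, affine_comp]
      have e1 : a⁻¹ * a = 1 := inv_mul_cancel₀ ha0
      have e2 : a⁻¹ * b' + -(b'/a) = 0 := by field_simp; ring
      rw [e1, e2, affine_id, Set.image_id]
    have hτ : affineSphere 1 (a⁻¹ * b + -(b'/a)) '' J = J := by
      rw [show (1:ℂ) = a⁻¹ * a from (inv_mul_cancel₀ ha0).symm, ← affine_comp,
        Set.image_comp, h1, hinv]
    by_contra hbb
    refine hT (a⁻¹ * b + -(b'/a)) ?_ hτ
    have he : a⁻¹ * b + -(b'/a) = (b - b')/a := by field_simp; ring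
    rw [he]
    exact div_ne_zero (sub_ne_zero.mpr hbb) ha0
  by_cases hex : ∃ a b : ℂ, ‖a‖ = 1 ∧ a ≠ 1 ∧ affineSphere a b '' J = J
  · obtain ⟨a₀, b₀, ha₀, ha₀1, h₀⟩ := hex
    have ha₀0 : a₀ ≠ 0 := fun h => by rw [h] at ha₀; simp at ha₀
    refine ⟨b₀ / (1 - a₀), ?_⟩
    intro σ hσ
    simp only [SigmaGroup, Set.mem_setOf_eq] at hσ
    rcases hσ with rfl | ⟨a, b, ha, ha1, rfl, himg⟩
    · refine ⟨1, by simp, ?_⟩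
      rw [show b₀/(1-a₀)*(1-1) = 0 by ring]
      exact affine_id.symm
    · have ha0 : a ≠ 0 := fun h => by rw [h] at ha; simp at ha
      have h1 : affineSphere (a * a₀) (a * b₀ + b) '' J = J := by
        rw [← affine_comp, Set.image_comp, h₀, himg]
      have h2 : affineSphere (a * a₀) (a₀ * b + b₀) '' J = J := by
        rw [mul_comm a a₀, ← affine_comp, Set.image_comp, himg, h₀]
      have hcomm : a * b₀ + b = a₀ * b + b₀ :=
        himage (a*a₀) _ (mul_ne_zero ha0 ha₀0) h1 _ h2
      refine ⟨a, ha, ?_⟩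
      have hne : (1 : ℂ) - a₀ ≠ 0 := sub_ne_zero.mpr (Ne.symm ha₀1)
      have hbv : b = b₀ / (1 - a₀) * (1 - a) := by
        field_simp
        linear_combination hcomm
      rw [hbv]
  · refine ⟨0, ?_⟩
    intro σ hσ
    simp only [SigmaGroup, Set.mem_setOf_eq] at hσ
    rcases hσ with rfl | ⟨a, b, ha, ha1, rfl, himg⟩
    · refine ⟨1, by simp, ?_⟩
      rw [show (0:ℂ)*(1-1) = 0 by ring]
      exact affine_id.symm
    · exact absurd ⟨a, b, ha, ha1, himg⟩ hex

end
end

section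
/- If two polynomials p and q of degree at least 2 commute, i.e. p∘q = q∘p, then J(p) = J(q). -/
open Polynomial OnePoint

noncomputable section

/- ### auxiliary lemmas -/

namespace JuliaCommuteAux

open Filter Metric Set Function

/-- evaluation of a polynomial as a plain function -/
def pev (p : Polynomial ℂ) : ℂ → ℂ := fun z => p.eval z

lemma pev_continuous (p : Polynomial ℂ) : Continuous (pev p) := p.continuous

lemma iter_continuous (p : Polynomial ℂ) (n : ℕ) : Continuous ((pev p)^[n]) :=
  (pev_continuous p).iterate n

lemma iter_differentiable (p : Polynomial ℂ) (n : ℕ) : Differentiable ℂ ((pev p)^[n]) := by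
  induction n with
  | zero => exact differentiable_id
  | succ n ih =>
    rw [Function.iterate_succ]
    exact ih.comp (p.differentiable)

lemma polySphere_iter_coe (p : Polynomial ℂ) (n : ℕ) (z : ℂ) :
    (polySphere p)^[n] (z : RSphere) = (((pev p)^[n] z : ℂ) : RSphere) := by
  induction n generalizing z with
  | zero => rfl
  | succ n ih =>
    rw [Function.iterate_succ_apply, Function.iterate_succ_apply]
    exact ih (p.eval z)

lemma polySphere_iter_infty (p : Polynomial ℂ) (n : ℕ) :
    (polySphere p)^[n] (∞ : RSphere) = (∞ : RSphere) := by
  induction n with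
  | zero => rfl
  | succ n ih => rw [Function.iterate_succ_apply]; exact ih

/- chordal distance computations -/

lemma chordal_coe_coe (a b : ℂ) :
    chordalDist (a : RSphere) (b : RSphere) =
      2 * ‖a - b‖ /
        (Real.sqrt (1 + ‖a‖ ^ 2) * Real.sqrt (1 + ‖b‖ ^ 2)) := rfl

lemma chordal_infty_coe (b : ℂ) :
    chordalDist (∞ : RSphere) (b : RSphere) = 2 / Real.sqrt (1 + ‖b‖ ^ 2) := rfl

lemma chordal_infty_infty : chordalDist (∞ : RSphere) (∞ : RSphere) = 0 := rfl

lemma one_le_sqrt_one_add_sq (x : ℝ) : 1 ≤ Real.sqrt (1 + x ^ 2) :=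
  calc (1:ℝ) = Real.sqrt 1 := Real.sqrt_one.symm
  _ ≤ Real.sqrt (1 + x ^ 2) := Real.sqrt_le_sqrt (le_add_of_nonneg_right (sq_nonneg x))

lemma sqrt_one_add_sq_pos (x : ℝ) : 0 < Real.sqrt (1 + x ^ 2) :=
  lt_of_lt_of_le one_pos (one_le_sqrt_one_add_sq x)

lemma abs_le_sqrt_one_add_sq (x : ℝ) : x ≤ Real.sqrt (1 + x ^ 2) := by
  rcases le_total x 0 with h | h
  · exact h.trans (sqrt_one_add_sq_pos x).le
  · calc x = Real.sqrt (x ^ 2) := by rw [Real.sqrt_sq h]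
    _ ≤ Real.sqrt (1 + x ^ 2) := Real.sqrt_le_sqrt (le_add_of_nonneg_left zero_le_one)

lemma chordal_coe_le (a b : ℂ) :
    chordalDist (a : RSphere) (b : RSphere) ≤ 2 * ‖a - b‖ := by
  rw [chordal_coe_coe]
  have h1 : 1 ≤ Real.sqrt (1 + ‖a‖ ^ 2) := one_le_sqrt_one_add_sq _
  have h2 : 1 ≤ Real.sqrt (1 + ‖b‖ ^ 2) := one_le_sqrt_one_add_sq _
  have hd : 1 ≤ Real.sqrt (1 + ‖a‖ ^ 2) * Real.sqrt (1 + ‖b‖ ^ 2) :=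
    le_trans (one_le_sqrt_one_add_sq _)
      (le_mul_of_one_le_right (by positivity) (one_le_sqrt_one_add_sq _))
  exact div_le_self (by positivity) hd

/-- upper bound via reciprocals, for points far from the origin -/
lemma chordal_coe_le_inv (a b : ℂ) (ha : a ≠ 0) (hb : b ≠ 0) :
    chordalDist (a : RSphere) (b : RSphere) ≤ 2 / ‖a‖ + 2 / ‖b‖ := by
  rw [chordal_coe_coe]
  have ha' : (0:ℝ) < ‖a‖ := by simpa using ha
  have hb' : (0:ℝ) < ‖b‖ := by simpa using hb
  have hsa : ‖a‖ ≤ Real.sqrt (1 + ‖a‖ ^ 2) := abs_le_sqrt_one_add_sq _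
  have hsb : ‖b‖ ≤ Real.sqrt (1 + ‖b‖ ^ 2) := abs_le_sqrt_one_add_sq _
  have h1 : 2 * ‖a - b‖ /
      (Real.sqrt (1 + ‖a‖ ^ 2) * Real.sqrt (1 + ‖b‖ ^ 2)) ≤
      2 * ‖a - b‖ / (‖a‖ * ‖b‖) := by
    apply div_le_div_of_nonneg_left (by positivity) (by positivity)
    exact mul_le_mul hsa hsb hb'.le (sqrt_one_add_sq_pos _).le
  refine h1.trans ?_
  have habs : ‖a - b‖ ≤ ‖a‖ + ‖b‖ := by
    simpa using norm_sub_le a b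
  rw [div_add_div _ _ (ne_of_gt ha') (ne_of_gt hb')]
  rw [div_le_div_iff₀ (by positivity) (by positivity)]
  have h2 := mul_le_mul_of_nonneg_right habs (mul_nonneg ha'.le hb'.le)
  nlinarith [h2]

lemma chordal_infty_le_inv (b : ℂ) (hb : b ≠ 0) :
    chordalDist (∞ : RSphere) (b : RSphere) ≤ 2 / ‖b‖ := by
  rw [chordal_infty_coe]
  have hb' : (0:ℝ) < ‖b‖ := by simpa using hb
  exact div_le_div_of_nonneg_left (by norm_num) hb' (abs_le_sqrt_one_add_sq _)

/-- lower bound: a point in the disc of radius `R` and a far-away point are chordally separated -/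
lemma chordal_lower {R : ℝ} (hR : 1 ≤ R) (a b : ℂ) (ha : ‖a‖ ≤ R)
    (hb : 2 * R ≤ ‖b‖) :
    1 / (Real.sqrt 2 * Real.sqrt (1 + R ^ 2)) ≤ chordalDist (a : RSphere) (b : RSphere) := by
  rw [chordal_coe_coe]
  have hR0 : (0:ℝ) < R := lt_of_lt_of_le one_pos hR
  have hb1 : 1 ≤ ‖b‖ := le_trans (by nlinarith) hb
  have hdiff : ‖b‖ / 2 ≤ ‖a - b‖ := by
    have h := norm_sub_norm_le b a
    rw [norm_sub_rev] at h
    nlinarith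
  have hsa : Real.sqrt (1 + ‖a‖ ^ 2) ≤ Real.sqrt (1 + R ^ 2) :=
    Real.sqrt_le_sqrt (by nlinarith [norm_nonneg a])
  have hsb : Real.sqrt (1 + ‖b‖ ^ 2) ≤ Real.sqrt 2 * ‖b‖ := by
    have h1 : (1:ℝ) + ‖b‖ ^ 2 ≤ 2 * ‖b‖ ^ 2 := by nlinarith
    calc Real.sqrt (1 + ‖b‖ ^ 2) ≤ Real.sqrt (2 * ‖b‖ ^ 2) :=
          Real.sqrt_le_sqrt h1
    _ = Real.sqrt 2 * ‖b‖ := by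
        rw [Real.sqrt_mul (by norm_num), Real.sqrt_sq (norm_nonneg b)]
  rw [div_le_div_iff₀ (by positivity) (by positivity)]
  have h2 : Real.sqrt (1 + ‖a‖ ^ 2) * Real.sqrt (1 + ‖b‖ ^ 2) ≤
      Real.sqrt (1 + R ^ 2) * (Real.sqrt 2 * ‖b‖) :=
    mul_le_mul hsa hsb (Real.sqrt_nonneg _) (Real.sqrt_nonneg _)
  have h3 := mul_le_mul_of_nonneg_left hdiff
    (show (0:ℝ) ≤ Real.sqrt 2 * Real.sqrt (1 + R ^ 2) by positivity)
  nlinarith [h2, h3]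


/- ### growth of polynomials near infinity -/

lemma poly_growth (p : Polynomial ℂ) (hp : 2 ≤ p.natDegree) :
    ∃ R : ℝ, 1 ≤ R ∧ ∀ z : ℂ, R ≤ ‖z‖ → 2 * ‖z‖ ≤ ‖p.eval z‖ := by
  set g := p.divX with hg
  set c := p.coeff 0 with hc
  have hdeg : 0 < g.degree := by
    have h1 : g.natDegree = p.natDegree - 1 := p.natDegree_divX_eq_natDegree_tsub_one
    have h2 : 1 ≤ g.natDegree := by omega
    have h3 : g ≠ 0 := by
      intro h0
      rw [h0] at h2
      simp at h2
    rw [Polynomial.degree_eq_natDegree h3]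
    exact_mod_cast Nat.lt_of_lt_of_le Nat.zero_lt_one h2
  have htend : Filter.Tendsto (fun z : ℂ => ‖g.eval z‖) (Filter.comap norm Filter.atTop)
      Filter.atTop := g.tendsto_norm_atTop hdeg Filter.tendsto_comap
  have hev : ∀ᶠ z : ℂ in Filter.comap norm Filter.atTop, 2 + ‖c‖ ≤ ‖g.eval z‖ :=
    htend.eventually_ge_atTop _
  rw [Filter.eventually_comap] at hev
  rw [Filter.eventually_atTop] at hev
  obtain ⟨R₀, hR₀⟩ := hev
  refine ⟨max R₀ 1, le_max_right _ _, fun z hz => ?_⟩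
  have h1 : (1:ℝ) ≤ ‖z‖ := le_trans (le_max_right _ _) hz
  have hgz : 2 + ‖c‖ ≤ ‖g.eval z‖ := by
    refine hR₀ ‖z‖ ?_ z rfl
    exact le_trans (le_max_left _ _) hz
  have hpz : p.eval z = g.eval z * z + c := by
    conv_lhs => rw [← p.divX_mul_X_add]
    simp [hg, hc]
  rw [hpz]
  have h2 : ‖g.eval z * z + c‖ ≥ ‖g.eval z * z‖ - ‖c‖ := by
    have h := norm_le_norm_add_norm_sub' (g.eval z * z) (g.eval z * z + c)
    have h' : ‖g.eval z * z - (g.eval z * z + c)‖ = ‖c‖ := by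
      rw [show g.eval z * z - (g.eval z * z + c) = -c by ring, norm_neg]
    rw [h'] at h
    linarith
  have h3 : ‖g.eval z * z‖ = ‖g.eval z‖ * ‖z‖ := by
    rw [norm_mul]
  rw [show ‖g.eval z * z + c‖ = ‖g.eval z * z + c‖ from rfl]
  nlinarith [norm_nonneg c, hgz, h1, h2, h3]

lemma iter_growth (p : Polynomial ℂ) {R : ℝ}
    (hgrow : ∀ z : ℂ, R ≤ ‖z‖ → 2 * ‖z‖ ≤ ‖p.eval z‖)
    (hR0 : 0 ≤ R) :
    ∀ (n : ℕ) (z : ℂ), R ≤ ‖z‖ →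
      2 ^ n * ‖z‖ ≤ ‖(pev p)^[n] z‖ := by
  intro n
  induction n with
  | zero => intro z _; simp
  | succ n ih =>
    intro z hz
    have h1 := ih z hz
    have h2 : R ≤ ‖(pev p)^[n] z‖ := by
      have : (1:ℝ) ≤ 2 ^ n := one_le_pow₀ one_le_two
      nlinarith
    have h3 := hgrow _ h2
    rw [Function.iterate_succ_apply']
    have : ‖p.eval ((pev p)^[n] z)‖ = ‖(pev p) ((pev p)^[n] z)‖ := rfl
    rw [show (pev p) ((pev p)^[n] z) = p.eval ((pev p)^[n] z) from rfl]
    calc 2 ^ (n+1) * ‖z‖ = 2 * (2 ^ n * ‖z‖) := by ring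
    _ ≤ 2 * ‖(pev p)^[n] z‖ := by nlinarith
    _ ≤ _ := h3

/- ### the filled Julia set -/

/-- The set of points with bounded forward orbit. -/
def Kset (p : Polynomial ℂ) : Set ℂ :=
  {z | ∃ M : ℝ, ∀ n : ℕ, ‖(pev p)^[n] z‖ ≤ M}

lemma Kset_eq (p : Polynomial ℂ) {R : ℝ} (hR : 1 ≤ R)
    (hgrow : ∀ z : ℂ, R ≤ ‖z‖ → 2 * ‖z‖ ≤ ‖p.eval z‖) :
    Kset p = {z | ∀ n : ℕ, ‖(pev p)^[n] z‖ ≤ R} := by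
  ext z
  constructor
  · rintro ⟨M, hM⟩ n
    by_contra hn
    push_neg at hn
    have hzn : R ≤ ‖(pev p)^[n] z‖ := hn.le
    obtain ⟨m, hm⟩ := pow_unbounded_of_one_lt M (one_lt_two (α := ℝ))
    have := iter_growth p hgrow (le_trans zero_le_one hR) m _ hzn
    rw [← Function.iterate_add_apply] at this
    have h1 : (1:ℝ) ≤ ‖(pev p)^[n] z‖ := le_trans hR hzn
    have h2 := hM (m + n)
    nlinarith [pow_pos (zero_lt_two (α := ℝ)) m]
  · intro h
    exact ⟨R, h⟩

lemma Kset_closed (p : Polynomial ℂ) {R : ℝ} (hR : 1 ≤ R)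
    (hgrow : ∀ z : ℂ, R ≤ ‖z‖ → 2 * ‖z‖ ≤ ‖p.eval z‖) :
    IsClosed (Kset p) := by
  rw [Kset_eq p hR hgrow]
  have : {z : ℂ | ∀ n : ℕ, ‖(pev p)^[n] z‖ ≤ R} =
      ⋂ n : ℕ, (fun z => ‖(pev p)^[n] z‖) ⁻¹' Set.Iic R := by
    ext z; simp [Set.mem_iInter]
  rw [this]
  exact isClosed_iInter fun n =>
    IsClosed.preimage (continuous_norm.comp (iter_continuous p n)) isClosed_Iic


/- ### Fatou set membership -/

lemma coe_image_mem_nhds {U : Set ℂ} (hU : IsOpen U) {z : ℂ} (hz : z ∈ U) :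
    ((fun w : ℂ => (w : RSphere)) '' U) ∈ nhds (z : RSphere) :=
  IsOpen.mem_nhds (OnePoint.isOpenEmbedding_coe.isOpenMap _ hU) ⟨z, hz, rfl⟩

lemma abs_add_bound (a b : ℂ) : ‖a - b‖ ≤ ‖a‖ + ‖b‖ := by
  simpa using norm_sub_le a b

/-- points of the interior of the filled Julia set are in the Fatou set -/
lemma mem_fatou_of_interior (p : Polynomial ℂ) {R : ℝ} (hR : 1 ≤ R)
    (hgrow : ∀ z : ℂ, R ≤ ‖z‖ → 2 * ‖z‖ ≤ ‖p.eval z‖)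
    (z₀ : ℂ) (hz₀ : z₀ ∈ interior (Kset p)) :
    (z₀ : RSphere) ∈ FatouSet (polySphere p) := by
  rw [Kset_eq p hR hgrow] at hz₀
  obtain ⟨r, hr0, hball⟩ := Metric.mem_nhds_iff.mp (mem_interior_iff_mem_nhds.mp hz₀)
  have hRpos : (0:ℝ) < 2 * R + 1 := by nlinarith
  intro ε hε
  set δ := min (r/2) (r * ε / (8 * (2*R+1))) with hδ
  have hδ0 : 0 < δ := lt_min (by positivity) (by positivity)
  refine ⟨(fun w : ℂ => (w : RSphere)) '' Metric.ball z₀ δ,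
    coe_image_mem_nhds Metric.isOpen_ball (Metric.mem_ball_self hδ0), ?_⟩
  rintro y ⟨w, hw, rfl⟩ n
  rw [polySphere_iter_coe, polySphere_iter_coe]
  refine lt_of_le_of_lt (chordal_coe_le _ _) ?_
  set f := (pev p)^[n] with hf
  have hbnd : ∀ x ∈ Metric.ball z₀ r, ‖f x‖ ≤ R := fun x hx => hball hx n
  have hmaps : Set.MapsTo f (Metric.ball z₀ r) (Metric.ball (f z₀) (2*R+1)) := by
    intro x hx
    rw [Metric.mem_ball, Complex.dist_eq]
    have h1 := hbnd x hx
    have h2 := hbnd z₀ (Metric.mem_ball_self hr0)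
    have := abs_add_bound (f x) (f z₀)
    linarith
  have hw' : w ∈ Metric.ball z₀ r := by
    rw [Metric.mem_ball] at hw ⊢
    have : δ ≤ r/2 := min_le_left _ _
    linarith
  have hSch := Complex.dist_le_div_mul_dist_of_mapsTo_ball
    ((iter_differentiable p n).differentiableOn)
    (hmaps.mono_right Metric.ball_subset_closedBall) hw'
  have hwd : dist w z₀ ≤ δ := le_of_lt (Metric.mem_ball.mp hw)
  have hkey : (2*R+1)/r * δ ≤ ε/8 := by
    have hδ2 : δ ≤ r * ε / (8 * (2*R+1)) := min_le_right _ _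
    calc (2*R+1)/r * δ ≤ (2*R+1)/r * (r * ε / (8 * (2*R+1))) :=
          mul_le_mul_of_nonneg_left hδ2 (by positivity)
    _ = ε/8 := by field_simp
  have h3 : dist (f w) (f z₀) ≤ ε/8 := by
    refine hSch.trans (le_trans ?_ hkey)
    exact mul_le_mul_of_nonneg_left hwd (by positivity)
  rw [Complex.dist_eq] at h3
  rw [show f z₀ - f w = -(f w - f z₀) by ring, norm_neg]
  linarith

/-- escaping points are in the Fatou set -/
lemma mem_fatou_of_escape (p : Polynomial ℂ) {R : ℝ} (hR : 1 ≤ R)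
    (hgrow : ∀ z : ℂ, R ≤ ‖z‖ → 2 * ‖z‖ ≤ ‖p.eval z‖)
    (z₀ : ℂ) (hz₀ : z₀ ∉ Kset p) :
    (z₀ : RSphere) ∈ FatouSet (polySphere p) := by
  have hR0 : (0:ℝ) < R := lt_of_lt_of_le one_pos hR
  intro ε hε
  set T := max R (4/ε) + 1 with hT
  have hTR : R ≤ T := le_trans (le_max_left _ _) (le_of_lt (lt_add_one _))
  have hT1 : 1 ≤ T := le_trans hR hTR
  have hT0 : 0 < T := lt_of_lt_of_le one_pos hT1
  have hTε : 4 / T < ε := by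
    have h1 : 4/ε < T := lt_of_le_of_lt (le_max_right _ _) (lt_add_one _)
    rw [div_lt_iff₀ hT0]
    rw [div_lt_iff₀ hε] at h1
    nlinarith
  rw [Kset_eq p hR hgrow] at hz₀
  simp only [Set.mem_setOf_eq, not_forall, not_le] at hz₀
  obtain ⟨n₀, hn₀⟩ := hz₀
  obtain ⟨m, hm⟩ := pow_unbounded_of_one_lt (2*T) (one_lt_two (α := ℝ))
  set N := m + n₀ with hN
  have h1 : (1:ℝ) ≤ ‖(pev p)^[n₀] z₀‖ := le_trans hR hn₀.le
  have hNz : 2*T ≤ ‖(pev p)^[N] z₀‖ := by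
    have := iter_growth p hgrow hR0.le m _ hn₀.le
    rw [← Function.iterate_add_apply] at this
    nlinarith [pow_pos (zero_lt_two (α := ℝ)) m]
  set U := {y : ℂ | T < ‖(pev p)^[N] y‖} ∩
    ⋂ n ∈ Finset.range N, {y : ℂ | ‖(pev p)^[n] y - (pev p)^[n] z₀‖ < ε/4} with hU
  have hUopen : IsOpen U := by
    refine IsOpen.inter ?_ ?_
    · have : {y : ℂ | T < ‖(pev p)^[N] y‖} =
          (fun y => ‖(pev p)^[N] y‖) ⁻¹' Set.Ioi T := rfl
      rw [this]
      exact IsOpen.preimage (continuous_norm.comp (iter_continuous p N)) isOpen_Ioi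
    · refine isOpen_biInter_finset fun n _ => ?_
      have : {y : ℂ | ‖(pev p)^[n] y - (pev p)^[n] z₀‖ < ε/4} =
          (fun y => (pev p)^[n] y) ⁻¹' Metric.ball ((pev p)^[n] z₀) (ε/4) := by
        ext y; simp [Metric.mem_ball, Complex.dist_eq]
      rw [this]
      exact IsOpen.preimage (iter_continuous p n) Metric.isOpen_ball
  have hz₀U : z₀ ∈ U := by
    constructor
    · exact lt_of_lt_of_le (by nlinarith) hNz
    · simp only [Set.mem_iInter]
      intro n _
      simp only [Set.mem_setOf_eq, sub_self, norm_zero]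
      positivity
  refine ⟨(fun w : ℂ => (w : RSphere)) '' U, coe_image_mem_nhds hUopen hz₀U, ?_⟩
  rintro y ⟨w, hw, rfl⟩ n
  rw [polySphere_iter_coe, polySphere_iter_coe]
  rcases lt_or_ge n N with hn | hn
  · have hwn : ‖(pev p)^[n] w - (pev p)^[n] z₀‖ < ε/4 := by
      have := hw.2
      simp only [Set.mem_iInter] at this
      exact this n (Finset.mem_range.mpr hn)
    refine lt_of_le_of_lt (chordal_coe_le _ _) ?_
    rw [show (pev p)^[n] z₀ - (pev p)^[n] w = -((pev p)^[n] w - (pev p)^[n] z₀) by ring,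
      norm_neg]
    linarith
  · obtain ⟨k, rfl⟩ : ∃ k, n = k + N := ⟨n - N, by omega⟩
    have hz1 : T ≤ ‖(pev p)^[k + N] z₀‖ := by
      have hge : R ≤ ‖(pev p)^[N] z₀‖ := le_trans hTR (by nlinarith)
      have := iter_growth p hgrow hR0.le k _ hge
      rw [← Function.iterate_add_apply] at this
      have h2k : (1:ℝ) ≤ 2 ^ k := one_le_pow₀ one_le_two
      nlinarith
    have hw1 : T ≤ ‖(pev p)^[k + N] w‖ := by
      have hTw : T < ‖(pev p)^[N] w‖ := hw.1
      have hge : R ≤ ‖(pev p)^[N] w‖ := le_trans hTR hTw.le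
      have := iter_growth p hgrow hR0.le k _ hge
      rw [← Function.iterate_add_apply] at this
      have h2k : (1:ℝ) ≤ 2 ^ k := one_le_pow₀ one_le_two
      nlinarith
    have hz0 : (pev p)^[k + N] z₀ ≠ 0 := by
      intro h; rw [h] at hz1; simp at hz1; linarith
    have hw0 : (pev p)^[k + N] w ≠ 0 := by
      intro h; rw [h] at hw1; simp at hw1; linarith
    refine lt_of_le_of_lt (chordal_coe_le_inv _ _ hz0 hw0) ?_
    have e1 : 2 / ‖(pev p)^[k + N] z₀‖ ≤ 2 / T :=
      div_le_div_of_nonneg_left (by norm_num) hT0 hz1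
    have e2 : 2 / ‖(pev p)^[k + N] w‖ ≤ 2 / T :=
      div_le_div_of_nonneg_left (by norm_num) hT0 hw1
    have : 2/T + 2/T = 4/T := by ring
    linarith

/-- the point at infinity is in the Fatou set -/
lemma infty_mem_fatou (p : Polynomial ℂ) {R : ℝ} (hR : 1 ≤ R)
    (hgrow : ∀ z : ℂ, R ≤ ‖z‖ → 2 * ‖z‖ ≤ ‖p.eval z‖) :
    (∞ : RSphere) ∈ FatouSet (polySphere p) := by
  have hR0 : (0:ℝ) < R := lt_of_lt_of_le one_pos hR
  intro ε hε
  set T := max R (2/ε) + 1 with hT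
  have hTR : R ≤ T := le_trans (le_max_left _ _) (le_of_lt (lt_add_one _))
  have hT0 : 0 < T := lt_of_lt_of_le hR0 hTR
  have hTε : 2 / T < ε := by
    have h1 : 2/ε < T := lt_of_le_of_lt (le_max_right _ _) (lt_add_one _)
    rw [div_lt_iff₀ hT0]
    rw [div_lt_iff₀ hε] at h1
    nlinarith
  set V := ((fun w : ℂ => (w : RSphere)) '' Metric.closedBall 0 T)ᶜ with hV
  have hVopen : IsOpen V := by
    rw [hV, isOpen_compl_iff]
    exact (OnePoint.isClosed_image_coe).mpr
      ⟨Metric.isClosed_closedBall, isCompact_closedBall 0 T⟩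
  have hVmem : (∞ : RSphere) ∈ V := by
    rw [hV, Set.mem_compl_iff]
    rintro ⟨w, _, hw⟩
    exact OnePoint.infty_ne_coe w hw.symm
  refine ⟨V, hVopen.mem_nhds hVmem, ?_⟩
  intro y hy n
  rw [polySphere_iter_infty]
  induction y using OnePoint.rec with
  | infty => rw [polySphere_iter_infty, chordal_infty_infty]; exact hε
  | coe w =>
    have hwT : T < ‖w‖ := by
      by_contra hcon
      push_neg at hcon
      exact hy ⟨w, by simpa [Metric.mem_closedBall, Complex.dist_eq] using hcon, rfl⟩
    rw [polySphere_iter_coe]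
    have hwn : T ≤ ‖(pev p)^[n] w‖ := by
      have := iter_growth p hgrow hR0.le n w (le_trans hTR hwT.le)
      have h2n : (1:ℝ) ≤ 2 ^ n := one_le_pow₀ one_le_two
      nlinarith
    have hw0 : (pev p)^[n] w ≠ 0 := by
      intro h; rw [h] at hwn; simp at hwn; linarith
    refine lt_of_le_of_lt (chordal_infty_le_inv _ hw0) ?_
    exact lt_of_le_of_lt (div_le_div_of_nonneg_left (by norm_num) hT0 hwn) hTε

/-- boundary points of the filled Julia set are not in the Fatou set -/
lemma frontier_not_fatou (p : Polynomial ℂ) {R : ℝ} (hR : 1 ≤ R)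
    (hgrow : ∀ z : ℂ, R ≤ ‖z‖ → 2 * ‖z‖ ≤ ‖p.eval z‖)
    (z₀ : ℂ) (hz₀ : z₀ ∈ Kset p) (hz₀' : z₀ ∉ interior (Kset p)) :
    (z₀ : RSphere) ∉ FatouSet (polySphere p) := by
  intro hF
  have hε : (0:ℝ) < 1 / (Real.sqrt 2 * Real.sqrt (1 + R ^ 2)) := by positivity
  obtain ⟨V, hV, hVe⟩ := hF _ hε
  have hU : (fun w : ℂ => (w : RSphere)) ⁻¹' V ∈ nhds z₀ :=
    OnePoint.continuous_coe.continuousAt.preimage_mem_nhds hV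
  obtain ⟨w, hwU, hwK⟩ : ∃ w ∈ (fun w : ℂ => (w : RSphere)) ⁻¹' V, w ∉ Kset p := by
    by_contra hcon
    push_neg at hcon
    exact hz₀' (mem_interior_iff_mem_nhds.mpr (Filter.mem_of_superset hU hcon))
  rw [Kset_eq p hR hgrow] at hwK hz₀
  simp only [Set.mem_setOf_eq, not_forall, not_le] at hwK
  obtain ⟨n₀, hn₀⟩ := hwK
  obtain ⟨m, hm⟩ := pow_unbounded_of_one_lt (2*R) (one_lt_two (α := ℝ))
  have h1 : (1:ℝ) ≤ ‖(pev p)^[n₀] w‖ := le_trans hR hn₀.le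
  have hR0 : (0:ℝ) < R := lt_of_lt_of_le one_pos hR
  have hNw : 2*R ≤ ‖(pev p)^[m + n₀] w‖ := by
    have := iter_growth p hgrow hR0.le m _ hn₀.le
    rw [← Function.iterate_add_apply] at this
    nlinarith [pow_pos (zero_lt_two (α := ℝ)) m]
  have hlow := chordal_lower hR _ _ (hz₀ (m + n₀)) hNw
  have := hVe _ hwU (m + n₀)
  rw [polySphere_iter_coe, polySphere_iter_coe] at this
  linarith

/- ### characterization of the Julia set -/

lemma julia_char (p : Polynomial ℂ) (hp : 2 ≤ p.natDegree) :
    JuliaSet (polySphere p) =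
      (fun z : ℂ => (z : RSphere)) '' (Kset p \ interior (Kset p)) := by
  obtain ⟨R, hR, hgrow⟩ := poly_growth p hp
  ext x
  simp only [JuliaSet, Set.mem_compl_iff]
  constructor
  · intro hx
    induction x using OnePoint.rec with
    | infty => exact absurd (infty_mem_fatou p hR hgrow) hx
    | coe z =>
      by_cases hzK : z ∈ Kset p
      · by_cases hzi : z ∈ interior (Kset p)
        · exact absurd (mem_fatou_of_interior p hR hgrow z hzi) hx
        · exact ⟨z, ⟨hzK, hzi⟩, rfl⟩
      · exact absurd (mem_fatou_of_escape p hR hgrow z hzK) hx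
  · rintro ⟨z, ⟨hzK, hzi⟩, rfl⟩
    exact frontier_not_fatou p hR hgrow z hzK hzi

/- ### commuting polynomials have the same filled Julia set -/

lemma Kset_subset_of_commute (p q : Polynomial ℂ) (hp : 2 ≤ p.natDegree)
    (hcomm : p.comp q = q.comp p) : Kset p ⊆ Kset q := by
  have hc : ∀ z : ℂ, p.eval (q.eval z) = q.eval (p.eval z) := fun z => by
    have := congrArg (Polynomial.eval z) hcomm
    rwa [Polynomial.eval_comp, Polynomial.eval_comp] at this
  have hcn : ∀ (n : ℕ) (z : ℂ), (pev p)^[n] (q.eval z) = q.eval ((pev p)^[n] z) := by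
    intro n
    induction n with
    | zero => intro z; rfl
    | succ n ih =>
      intro z
      rw [Function.iterate_succ_apply', Function.iterate_succ_apply', ih]
      exact hc _
  obtain ⟨R, hR, hgrow⟩ := poly_growth p hp
  have hstep : ∀ z ∈ Kset p, q.eval z ∈ Kset p := by
    rintro z ⟨M, hM⟩
    obtain ⟨C, hC⟩ := (isCompact_closedBall (0:ℂ) M).exists_bound_of_continuousOn
      (q.continuous.continuousOn)
    refine ⟨C, fun n => ?_⟩
    rw [hcn n z]
    have : (pev p)^[n] z ∈ Metric.closedBall (0:ℂ) M := by
      rw [Metric.mem_closedBall, Complex.dist_eq, sub_zero]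
      exact hM n
    exact hC _ this
  have hqiter : ∀ (m : ℕ) (z : ℂ), z ∈ Kset p → (pev q)^[m] z ∈ Kset p := by
    intro m
    induction m with
    | zero => intro z hz; exact hz
    | succ m ih =>
      intro z hz
      rw [Function.iterate_succ_apply']
      exact hstep _ (ih z hz)
  intro z hz
  refine ⟨R, fun m => ?_⟩
  have := hqiter m z hz
  rw [Kset_eq p hR hgrow] at this
  exact this 0

end JuliaCommuteAux

/-- If two polynomials `p` and `q` of degree at least `2` commute,
then they have the same Julia set. -/
theorem juliaSet_eq_of_commute (p q : Polynomial ℂ)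
    (hp : 2 ≤ p.natDegree) (hq : 2 ≤ q.natDegree)
    (hcomm : p.comp q = q.comp p) :
    JuliaSet (polySphere p) = JuliaSet (polySphere q) := by
  have hKeq : JuliaCommuteAux.Kset p = JuliaCommuteAux.Kset q :=
    subset_antisymm (JuliaCommuteAux.Kset_subset_of_commute p q hp hcomm)
      (JuliaCommuteAux.Kset_subset_of_commute q p hq hcomm.symm)
  rw [JuliaCommuteAux.julia_char p hp, JuliaCommuteAux.julia_char q hq, hKeq]

end
end

section
/- Let p(z) = z^α p₀(z^β) be a normalized polynomial of degree at least 2 with α and β maximal for this expression, let λ ∈ ℂ with λ^β = 1 and λ ≠ 1, let σ(z) = λz, and set q = σ∘p∘σ^{-1}, so that q(z) = λ^{1−α} z^α p₀(z^β). Then p∘q = q∘p if and only if λ^{(α−1)²} = 1. -/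
open Polynomial OnePoint

noncomputable section

/-- Let `p(z) = z^α p₀(z^β)` be a normalized polynomial of degree at
least `2` with `α`, `β` maximal, `λ^β = 1`, `λ ≠ 1`, `σ(z) = λz`, and
`q = σ∘p∘σ⁻¹`, so `q(z) = λ^{1-α} z^α p₀(z^β)`.  Then `p∘q = q∘p` iff
`λ^{(α-1)²} = 1`. -/
theorem conjugate_commutes_iff (p p₀ q : Polynomial ℂ) (α β : ℕ) (hβ : 1 ≤ β)
    (hp : p = X ^ α * p₀.comp (X ^ β))
    (hmono : p₀.Monic) (hconst : p₀.coeff 0 ≠ 0)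
    (hgcd : (p₀.support.erase 0).gcd id = 1)
    (hdeg : 2 ≤ p.natDegree) (hmonic : p.Monic) (hcent : p.coeff (p.natDegree - 1) = 0)
    (lam : ℂ) (hlam : lam ^ β = 1) (hlam1 : lam ≠ 1)
    (hq : q = C (lam ^ ((1 : ℤ) - (α : ℤ))) * (X ^ α * p₀.comp (X ^ β)))
    (hconj : ∀ z : ℂ, q.eval (lam * z) = lam * p.eval z) :
    p.comp q = q.comp p ↔ lam ^ (((α : ℤ) - 1) ^ 2) = 1 := by
  have hlam0 : lam ≠ 0 := by
    intro h
    rw [h, zero_pow (by omega : β ≠ 0)] at hlam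
    exact one_ne_zero hlam.symm
  set c : ℂ := lam ^ ((1 : ℤ) - (α : ℤ)) with hc
  have hc0 : c ≠ 0 := zpow_ne_zero _ hlam0
  have hqp : q = C c * p := by rw [hq, hp]
  have hp0 : p ≠ 0 := hmonic.ne_zero
  have hpC : ∀ a : ℂ, p ≠ C a := by
    intro a h
    have : p.natDegree = 0 := by rw [h, natDegree_C]
    omega
  have hppne : p.comp p ≠ 0 := by
    intro h
    rw [comp_eq_zero_iff] at h
    rcases h with h | ⟨_, h⟩
    · exact hp0 h
    · exact hpC _ h
  have hcβ : c ^ β = 1 := by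
    rw [hc, ← zpow_natCast, ← zpow_mul, mul_comm, zpow_mul, zpow_natCast, hlam, one_zpow]
  have hqβ : q ^ β = p ^ β := by
    rw [hqp, mul_pow, ← C_pow, hcβ, C_1, one_mul]
  have hcomp_pp : p.comp p = p ^ α * p₀.comp (p ^ β) := by
    nth_rewrite 1 [hp]
    rw [mul_comp, pow_comp, X_comp, comp_assoc, pow_comp, X_comp]
  have hcomp_pq : p.comp q = C (c ^ α) * p.comp p := by
    nth_rewrite 1 [hp]
    rw [mul_comp, pow_comp, X_comp, comp_assoc, pow_comp, X_comp, hqβ, hqp,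
      mul_pow, ← C_pow, hcomp_pp]
    ring
  have hcomp_qp : q.comp p = C c * p.comp p := by
    rw [hqp, mul_comp, C_comp]
  rw [hcomp_pq, hcomp_qp]
  have hcancel : C (c ^ α) * p.comp p = C c * p.comp p ↔ c ^ α = c := by
    constructor
    · intro h
      have := mul_right_cancel₀ hppne h
      exact C_injective this
    · intro h; rw [h]
  rw [hcancel, hc, ← zpow_natCast, ← zpow_mul,
    show ((1:ℤ) - (α:ℤ)) * (α:ℤ) = ((1:ℤ) - (α:ℤ)) + (-(((α:ℤ) - 1) ^ 2)) by ring,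
    zpow_add₀ hlam0, zpow_neg, mul_right_eq_self₀, inv_eq_one,
    or_iff_left (zpow_ne_zero _ hlam0)]

end
end

section
/- Let R(z) = z^d/(a₀z^d + a₁z^{d−1} + ⋯ + a_{d−1}z + a_d) be a rational map of degree d ≥ 2 with a_d ≠ 0 whose only exceptional point is 0. Let ζ = −a_{d−1}/(d·a_d), and let β be the order of rotational symmetries of R, i.e. the maximal β in the expression z^α p₀(z^β) of the normalized polynomial to which R is conjugate by a Möbius transformation. Then every Möbius map of the form z ↦ z/(ζ(1−λ)z + λ) with λ^β = 1 preserves J(R); that is, {z ↦ z/(ζ(1−λ)z + λ) : λ^β = 1} ⊆ M(R). -/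
open Polynomial OnePoint

noncomputable section

/-! ### Auxiliary lemmas -/

section AuxLemmas

open Filter Topology

@[simp] lemma invSphere_infty : invSphere ∞ = ((0:ℂ) : RSphere) := rfl
@[simp] lemma invSphere_coe (z : ℂ) :
    invSphere (z : RSphere) = if z = 0 then ∞ else ((z⁻¹ : ℂ) : RSphere) := rfl
@[simp] lemma affineSphere_infty (a b : ℂ) : affineSphere a b ∞ = ∞ := rfl
@[simp] lemma affineSphere_coe (a b z : ℂ) :
    affineSphere a b (z : RSphere) = ((a * z + b : ℂ) : RSphere) := rfl
@[simp] lemma mobiusSphere_infty (a b c d : ℂ) :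
    mobiusSphere a b c d ∞ = if c = 0 then ∞ else ((a / c : ℂ) : RSphere) := rfl
@[simp] lemma mobiusSphere_coe (a b c d z : ℂ) :
    mobiusSphere a b c d (z : RSphere)
      = if c * z + d = 0 then ∞ else (((a * z + b) / (c * z + d) : ℂ) : RSphere) := rfl
@[simp] lemma polySphere_infty (p : Polynomial ℂ) : polySphere p ∞ = ∞ := rfl
@[simp] lemma polySphere_coe (p : Polynomial ℂ) (z : ℂ) :
    polySphere p (z : RSphere) = ((p.eval z : ℂ) : RSphere) := rfl
@[simp] lemma ratSphere_infty (P Q : Polynomial ℂ) :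
    ratSphere P Q ∞ = if P.natDegree > Q.natDegree then ∞
      else ((P.leadingCoeff / Q.leadingCoeff : ℂ) : RSphere) := rfl
@[simp] lemma ratSphere_coe (P Q : Polynomial ℂ) (z : ℂ) :
    ratSphere P Q (z : RSphere)
      = if Q.eval z = 0 then ∞ else ((P.eval z / Q.eval z : ℂ) : RSphere) := rfl

lemma invSphere_invSphere (x : RSphere) : invSphere (invSphere x) = x := by
  induction x using OnePoint.rec with
  | infty => simp
  | coe z => by_cases hz : z = 0 <;> simp [hz, inv_eq_zero]

lemma affineSphere_injective {a : ℂ} (ha : a ≠ 0) (b : ℂ) :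
    Function.Injective (affineSphere a b) := by
  intro x y hxy
  induction x using OnePoint.rec with
  | infty =>
    induction y using OnePoint.rec with
    | infty => rfl
    | coe w => simp at hxy
  | coe z =>
    induction y using OnePoint.rec with
    | infty => simp at hxy
    | coe w =>
      simp only [affineSphere_coe, OnePoint.coe_eq_coe] at hxy
      exact congrArg _ (mul_left_cancel₀ ha (by linear_combination hxy))

lemma polySphere_eq_infty_iff (p : Polynomial ℂ) (z : RSphere) :
    polySphere p z = ∞ ↔ z = ∞ := by
  induction z using OnePoint.rec with
  | infty => simp
  | coe w => simp

lemma polySphere_iterate_eq_infty (p : Polynomial ℂ) (n : ℕ) (z : RSphere) :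
    (polySphere p)^[n] z = ∞ ↔ z = ∞ := by
  induction n generalizing z with
  | zero => simp
  | succ n ih => rw [Function.iterate_succ_apply, ih, polySphere_eq_infty_iff]

/-! #### Homogeneous coordinates and the chordal metric -/

def hvec : RSphere → ℂ × ℂ := fun x =>
  match x with
  | (∞ : RSphere) => (1, 0)
  | (z : ℂ) => (z, 1)
@[simp] lemma hvec_infty : hvec ∞ = (1, 0) := rfl
@[simp] lemma hvec_coe (z : ℂ) : hvec (z : RSphere) = (z, 1) := rfl

def hcross (u v : ℂ × ℂ) : ℂ := u.1 * v.2 - u.2 * v.1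
def hnsq (u : ℂ × ℂ) : ℝ := ‖u.1‖ ^ 2 + ‖u.2‖ ^ 2
def hgm (a b c d : ℂ) (u : ℂ × ℂ) : ℂ × ℂ := (a * u.1 + b * u.2, c * u.1 + d * u.2)
def hpd (u v : ℂ × ℂ) : ℝ :=
  2 * ‖hcross u v‖ / (Real.sqrt (hnsq u) * Real.sqrt (hnsq v))

lemma hnsq_nonneg (u : ℂ × ℂ) : 0 ≤ hnsq u := by unfold hnsq; positivity

lemma one_le_hnsq_hvec (x : RSphere) : 1 ≤ hnsq (hvec x) := by
  induction x using OnePoint.rec with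
  | infty => simp [hnsq]
  | coe z =>
    have h := sq_nonneg (‖z‖)
    simp only [hvec_coe, hnsq]
    simp

lemma chordalDist_eq_hpd (x y : RSphere) : chordalDist x y = hpd (hvec x) (hvec y) := by
  induction x using OnePoint.rec with
  | infty =>
    induction y using OnePoint.rec with
    | infty => simp [chordalDist, hpd, hcross, hnsq]
    | coe w => simp [chordalDist, hpd, hcross, hnsq, add_comm]
  | coe z =>
    induction y using OnePoint.rec with
    | infty => simp [chordalDist, hpd, hcross, hnsq, add_comm]
    | coe w =>
      simp [chordalDist, hpd, hcross, hnsq]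
      rw [add_comm (‖z‖ ^ 2) 1, add_comm (‖w‖ ^ 2) 1]

lemma hpd_smul_left (s : ℂ) (hs : s ≠ 0) (u v : ℂ × ℂ) : hpd (s • u) v = hpd u v := by
  have h1 : hcross (s • u) v = s * hcross u v := by
    simp [hcross, Prod.smul_def, smul_eq_mul]; ring
  have h2 : hnsq (s • u) = ‖s‖ ^ 2 * hnsq u := by
    simp [hnsq, Prod.smul_def, smul_eq_mul, norm_mul, mul_pow]; ring
  have hsa : 0 < ‖s‖ := norm_pos_iff.mpr hs
  simp only [hpd, h1, h2, norm_mul]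
  rw [Real.sqrt_mul (by positivity), Real.sqrt_sq hsa.le]
  rw [show (2 : ℝ) * (‖s‖ * ‖hcross u v‖) =
    ‖s‖ * (2 * ‖hcross u v‖) by ring]
  rw [show ‖s‖ * Real.sqrt (hnsq u) * Real.sqrt (hnsq v) =
    ‖s‖ * (Real.sqrt (hnsq u) * Real.sqrt (hnsq v)) by ring]
  exact mul_div_mul_left _ _ hsa.ne'

lemma hpd_smul_right (s : ℂ) (hs : s ≠ 0) (u v : ℂ × ℂ) : hpd u (s • v) = hpd u v := by
  have h : ∀ w w', hpd w w' = hpd w' w := by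
    intro w w'
    simp only [hpd, hcross]
    rw [show w.1 * w'.2 - w.2 * w'.1 = -(w'.1 * w.2 - w'.2 * w.1) by ring, norm_neg,
      mul_comm (Real.sqrt (hnsq w))]
  rw [h, hpd_smul_left s hs, h]

lemma hcross_hgm (a b c d : ℂ) (u v : ℂ × ℂ) :
    hcross (hgm a b c d u) (hgm a b c d v) = (a * d - b * c) * hcross u v := by
  simp [hcross, hgm]; ring

lemma hnsq_hgm_le (a b c d : ℂ) (u : ℂ × ℂ) :
    hnsq (hgm a b c d u) ≤
      (‖a‖ ^ 2 + ‖b‖ ^ 2 + ‖c‖ ^ 2 + ‖d‖ ^ 2) * hnsq u := by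
  have h1 : ‖a * u.1 + b * u.2‖ ≤ ‖a‖ * ‖u.1‖
      + ‖b‖ * ‖u.2‖ := by
    refine (norm_add_le _ _).trans ?_; simp [norm_mul]
  have h2 : ‖c * u.1 + d * u.2‖ ≤ ‖c‖ * ‖u.1‖
      + ‖d‖ * ‖u.2‖ := by
    refine (norm_add_le _ _).trans ?_; simp [norm_mul]
  have ha := norm_nonneg a; have hb := norm_nonneg b
  have hc := norm_nonneg c; have hd := norm_nonneg d
  have hu1 := norm_nonneg u.1; have hu2 := norm_nonneg u.2
  have g1 : ‖a * u.1 + b * u.2‖ ^ 2 ≤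
      (‖a‖ * ‖u.1‖ + ‖b‖ * ‖u.2‖) ^ 2 :=
    pow_le_pow_left₀ (norm_nonneg _) h1 2
  have g2 : ‖c * u.1 + d * u.2‖ ^ 2 ≤
      (‖c‖ * ‖u.1‖ + ‖d‖ * ‖u.2‖) ^ 2 :=
    pow_le_pow_left₀ (norm_nonneg _) h2 2
  simp only [hnsq, hgm]
  nlinarith [sq_nonneg (‖a‖ * ‖u.2‖ - ‖b‖ * ‖u.1‖),
    sq_nonneg (‖c‖ * ‖u.2‖ - ‖d‖ * ‖u.1‖)]

lemma hnsq_hgm_ge (a b c d : ℂ) (u : ℂ × ℂ) :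
    ‖a * d - b * c‖ ^ 2 * hnsq u ≤
      (‖a‖ ^ 2 + ‖b‖ ^ 2 + ‖c‖ ^ 2 + ‖d‖ ^ 2)
        * hnsq (hgm a b c d u) := by
  have key : hgm d (-b) (-c) a (hgm a b c d u) = (a * d - b * c) • u := by
    simp [hgm, Prod.smul_def, smul_eq_mul]; constructor <;> ring
  have h := hnsq_hgm_le d (-b) (-c) a (hgm a b c d u)
  rw [key] at h
  have hsm : hnsq ((a * d - b * c) • u) = ‖a * d - b * c‖ ^ 2 * hnsq u := by
    simp [hnsq, Prod.smul_def, smul_eq_mul, norm_mul, mul_pow]; ring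
  rw [hsm] at h
  calc ‖a * d - b * c‖ ^ 2 * hnsq u ≤ _ := h
    _ = _ := by rw [norm_neg, norm_neg]; ring

lemma exists_hvec_scalar (a b c d : ℂ) (hdet : a * d - b * c ≠ 0) (x : RSphere) :
    ∃ s : ℂ, s ≠ 0 ∧ hgm a b c d (hvec x) = s • hvec (mobiusSphere a b c d x) := by
  induction x using OnePoint.rec with
  | infty =>
    by_cases hc : c = 0
    · refine ⟨a, fun ha => hdet (by simp [ha, hc]), ?_⟩
      simp [hgm, hc, Prod.smul_def]
    · refine ⟨c, hc, ?_⟩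
      simp [hgm, hc, Prod.smul_def, smul_eq_mul]
      field_simp
  | coe z =>
    by_cases hz : c * z + d = 0
    · refine ⟨a * z + b, ?_, ?_⟩
      · intro h0
        apply hdet
        have e1 : a * (c * z + d) - c * (a * z + b) = a * d - b * c := by ring
        rw [hz, h0] at e1; simpa using e1.symm
      · simp [hgm, hz, Prod.smul_def, smul_eq_mul]
    · refine ⟨c * z + d, hz, ?_⟩
      simp [hgm, hz, Prod.smul_def, smul_eq_mul]
      field_simp
      rw [mul_div_cancel_right₀ _ (by rwa [mul_comm z c] : z * c + d ≠ 0)]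

lemma hcross_hvec_eq_zero_iff (x y : RSphere) : hcross (hvec x) (hvec y) = 0 ↔ x = y := by
  induction x using OnePoint.rec with
  | infty =>
    induction y using OnePoint.rec with
    | infty => simp [hcross]
    | coe w => simp [hcross]
  | coe z =>
    induction y using OnePoint.rec with
    | infty => simp [hcross]
    | coe w => simp [hcross, sub_eq_zero]

lemma mobius_lipschitz (a b c d : ℂ) (hdet : a * d - b * c ≠ 0) (x y : RSphere) :
    chordalDist (mobiusSphere a b c d x) (mobiusSphere a b c d y) ≤
      ((‖a‖ ^ 2 + ‖b‖ ^ 2 + ‖c‖ ^ 2 + ‖d‖ ^ 2)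
        / ‖a * d - b * c‖) * chordalDist x y := by
  obtain ⟨s, hs, hsx⟩ := exists_hvec_scalar a b c d hdet x
  obtain ⟨t, ht, hty⟩ := exists_hvec_scalar a b c d hdet y
  rw [chordalDist_eq_hpd, chordalDist_eq_hpd]
  have hrw : hpd (hvec (mobiusSphere a b c d x)) (hvec (mobiusSphere a b c d y))
      = hpd (hgm a b c d (hvec x)) (hgm a b c d (hvec y)) := by
    rw [hsx, hty, hpd_smul_left s hs, hpd_smul_right t ht]
  rw [hrw]
  set u := hvec x with hu
  set v := hvec y with hv
  set K := ‖a‖ ^ 2 + ‖b‖ ^ 2 + ‖c‖ ^ 2 + ‖d‖ ^ 2 with hK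
  set D := ‖a * d - b * c‖ with hD
  have hDpos : 0 < D := norm_pos_iff.mpr hdet
  have hu1 : 1 ≤ hnsq u := one_le_hnsq_hvec x
  have hv1 : 1 ≤ hnsq v := one_le_hnsq_hvec y
  have hgeu := hnsq_hgm_ge a b c d u
  have hgev := hnsq_hgm_ge a b c d v
  have hKpos : 0 < K := by nlinarith [hnsq_nonneg (hgm a b c d u)]
  have hNu : 0 < hnsq (hgm a b c d u) := by nlinarith
  have hNv : 0 < hnsq (hgm a b c d v) := by nlinarith
  have key1 : D * Real.sqrt (hnsq u) ≤ Real.sqrt K * Real.sqrt (hnsq (hgm a b c d u)) := by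
    rw [← Real.sqrt_sq hDpos.le, ← Real.sqrt_mul (by positivity), ← Real.sqrt_mul hKpos.le]
    exact Real.sqrt_le_sqrt hgeu
  have key2 : D * Real.sqrt (hnsq v) ≤ Real.sqrt K * Real.sqrt (hnsq (hgm a b c d v)) := by
    rw [← Real.sqrt_sq hDpos.le, ← Real.sqrt_mul (by positivity), ← Real.sqrt_mul hKpos.le]
    exact Real.sqrt_le_sqrt hgev
  have hnum : ‖hcross (hgm a b c d u) (hgm a b c d v)‖
      = D * ‖hcross u v‖ := by
    rw [hcross_hgm, norm_mul]
  unfold hpd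
  rw [hnum]
  set B := ‖hcross u v‖ with hB
  have hBnn : 0 ≤ B := norm_nonneg _
  have hPu : 0 < Real.sqrt (hnsq u) := Real.sqrt_pos.2 (by linarith)
  have hPv : 0 < Real.sqrt (hnsq v) := Real.sqrt_pos.2 (by linarith)
  have hQu : 0 < Real.sqrt (hnsq (hgm a b c d u)) := Real.sqrt_pos.2 hNu
  have hQv : 0 < Real.sqrt (hnsq (hgm a b c d v)) := Real.sqrt_pos.2 hNv
  rw [div_mul_div_comm, div_le_div_iff₀ (by positivity) (by positivity)]
  have hsqK : Real.sqrt K * Real.sqrt K = K := Real.mul_self_sqrt hKpos.le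
  have prod : (D * Real.sqrt (hnsq u)) * (D * Real.sqrt (hnsq v)) ≤
      K * (Real.sqrt (hnsq (hgm a b c d u)) * Real.sqrt (hnsq (hgm a b c d v))) := by
    calc (D * Real.sqrt (hnsq u)) * (D * Real.sqrt (hnsq v))
        ≤ (Real.sqrt K * Real.sqrt (hnsq (hgm a b c d u)))
          * (Real.sqrt K * Real.sqrt (hnsq (hgm a b c d v))) := by
          apply mul_le_mul key1 key2 (by positivity) (by positivity)
      _ = _ := by rw [mul_mul_mul_comm, hsqK]
  nlinarith [mul_le_mul_of_nonneg_left prod (by positivity : (0:ℝ) ≤ 2 * B)]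

lemma mobiusSphere_injective (a b c d : ℂ) (hdet : a * d - b * c ≠ 0) :
    Function.Injective (mobiusSphere a b c d) := by
  intro x y hxy
  obtain ⟨s, hs, hsx⟩ := exists_hvec_scalar a b c d hdet x
  obtain ⟨t, ht, hty⟩ := exists_hvec_scalar a b c d hdet y
  rw [← hcross_hvec_eq_zero_iff]
  have h := hcross_hgm a b c d (hvec x) (hvec y)
  rw [hsx, hty, hxy] at h
  have hz : hcross (s • hvec (mobiusSphere a b c d y)) (t • hvec (mobiusSphere a b c d y)) = 0 := by
    simp [hcross, Prod.smul_def, smul_eq_mul]; ring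
  rw [hz] at h
  exact (mul_eq_zero.1 h.symm).resolve_left hdet

lemma chordalDist_nonneg (x y : RSphere) : 0 ≤ chordalDist x y := by
  rw [chordalDist_eq_hpd]
  unfold hpd
  have := norm_nonneg (hcross (hvec x) (hvec y))
  positivity

/-! #### Continuity -/

lemma cocompact_eq_cobounded : cocompact ℂ = Bornology.cobounded ℂ :=
  (Metric.cobounded_eq_cocompact).symm

lemma affine_tendsto_cobounded {a : ℂ} (ha : a ≠ 0) (b : ℂ) :
    Tendsto (fun z : ℂ => a * z + b) (Bornology.cobounded ℂ) (Bornology.cobounded ℂ) := by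
  rw [← tendsto_norm_atTop_iff_cobounded]
  have hmono : ∀ z : ℂ, ‖a‖ * ‖z‖ - ‖b‖ ≤ ‖a * z + b‖ := by
    intro z
    have h : ‖a * z‖ ≤ ‖a * z + b‖ + ‖b‖ := by
      simpa using norm_add_le (a * z + b) (-b)
    rw [norm_mul] at h; linarith
  apply tendsto_atTop_mono hmono
  apply tendsto_atTop_add_const_right
  exact (tendsto_norm_cobounded_atTop.const_mul_atTop (norm_pos_iff.2 ha))

lemma affineSphere_continuous {a : ℂ} (ha : a ≠ 0) (b : ℂ) :
    Continuous (affineSphere a b) := by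
  rw [OnePoint.continuous_iff]
  constructor
  · rw [show affineSphere a b ∞ = ∞ from rfl]
    have h1 : Tendsto (fun z : ℂ => a * z + b) (coclosedCompact ℂ) (coclosedCompact ℂ) := by
      rw [coclosedCompact_eq_cocompact, cocompact_eq_cobounded]
      exact affine_tendsto_cobounded ha b
    exact (OnePoint.tendsto_coe_infty.comp h1)
  · exact OnePoint.continuous_coe.comp (by continuity)

lemma invSphere_continuous : Continuous invSphere := by
  rw [OnePoint.continuous_iff]
  constructor
  · rw [show invSphere ∞ = ((0:ℂ) : RSphere) from rfl]
    have hne : ∀ᶠ z : ℂ in coclosedCompact ℂ, z ≠ 0 := by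
      rw [coclosedCompact_eq_cocompact]
      exact Eventually.mono
        ((isCompact_singleton : IsCompact ({(0:ℂ)} : Set ℂ)).compl_mem_cocompact)
        (fun z hz => hz)
    have h1 : Tendsto (fun z : ℂ => ((z⁻¹ : ℂ) : RSphere)) (coclosedCompact ℂ)
        (𝓝 ((0:ℂ) : RSphere)) := by
      have h2 : Tendsto (fun z : ℂ => z⁻¹) (coclosedCompact ℂ) (𝓝 (0:ℂ)) := by
        rw [coclosedCompact_eq_cocompact, cocompact_eq_cobounded]
        exact tendsto_inv₀_cobounded
      exact ((OnePoint.continuous_coe (X := ℂ)).tendsto (0:ℂ)).comp h2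
    apply h1.congr'
    filter_upwards [hne] with z hz
    simp [hz]
  · rw [continuous_iff_continuousAt]
    intro z
    by_cases hz : z = 0
    · subst hz
      show Tendsto (fun w : ℂ => invSphere ↑w) (𝓝 (0:ℂ)) _
      have hval : 𝓝 ((fun w : ℂ => invSphere ↑w) 0) = 𝓝 (∞ : RSphere) := by
        simp
      rw [hval, ← nhdsNE_sup_pure (0:ℂ), tendsto_sup]
      constructor
      · have h1 : Tendsto (fun w : ℂ => ((w⁻¹ : ℂ) : RSphere)) (𝓝[≠] (0:ℂ)) (𝓝 ∞) := by
          apply OnePoint.tendsto_coe_infty.comp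
          rw [coclosedCompact_eq_cocompact, cocompact_eq_cobounded]
          exact tendsto_inv₀_nhdsNE_zero
        apply h1.congr'
        filter_upwards [self_mem_nhdsWithin] with w hw
        simp only [Set.mem_compl_iff, Set.mem_singleton_iff] at hw
        simp [Function.comp, hw]
      · have : (fun w : ℂ => invSphere ↑w) 0 = ∞ := by simp
        rw [← this]
        exact tendsto_pure_nhds _ _
    · have h1 : ContinuousAt (fun w : ℂ => ((w⁻¹ : ℂ) : RSphere)) z :=
        OnePoint.continuous_coe.continuousAt.comp (continuousAt_inv₀ hz)
      apply h1.congr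
      filter_upwards [eventually_ne_nhds hz] with w hw
      simp [Function.comp, hw]

/-! #### Polynomial lemmas -/

lemma coeff_comp_C_mul_X (q : Polynomial ℂ) (f : ℂ) (k : ℕ) :
    (q.comp (C f * X)).coeff k = q.coeff k * f ^ k := by
  rw [comp_eq_sum_left, Polynomial.sum, finset_sum_coeff]
  rw [Finset.sum_eq_single k]
  · rw [mul_pow, ← C_pow, ← mul_assoc, ← C_mul, coeff_C_mul, coeff_X_pow, if_pos rfl, mul_one]
  · intro i _ hik
    rw [mul_pow, ← C_pow, ← mul_assoc, ← C_mul, coeff_C_mul, coeff_X_pow,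
      if_neg (fun h => hik h.symm), mul_zero]
  · intro hk
    rw [notMem_support_iff.1 hk] at *
    simp

lemma hasse_top (p : Polynomial ℂ) (n : ℕ) (hn : p.natDegree = n) (hm : p.Monic) :
    hasseDeriv n p = C 1 := by
  have h1 : (hasseDeriv n p).natDegree ≤ 0 := by
    have := natDegree_hasseDeriv_le p n
    omega
  rw [eq_C_of_natDegree_le_zero h1, hasseDeriv_coeff]
  simp [hn ▸ hm.coeff_natDegree]

lemma hasse_next (p : Polynomial ℂ) (n : ℕ) (hn : p.natDegree = n) (hm : p.Monic) (h2 : 2 ≤ n)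
    (hc : p.coeff (n - 1) = 0) :
    hasseDeriv (n - 1) p = C (n : ℂ) * X := by
  have h1 : (hasseDeriv (n - 1) p).natDegree ≤ 1 := by
    have := natDegree_hasseDeriv_le p (n - 1)
    omega
  rw [eq_X_add_C_of_natDegree_le_one h1]
  rw [hasseDeriv_coeff, hasseDeriv_coeff]
  have e1 : 1 + (n - 1) = n := by omega
  have e0 : 0 + (n - 1) = n - 1 := by omega
  rw [e1, e0, hc]
  have hch : n.choose (n - 1) = n := by
    rw [← Nat.choose_symm (Nat.sub_le n 1), show n - (n - 1) = 1 by omega, Nat.choose_one_right]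
  have hcn : p.coeff n = 1 := hn ▸ hm.coeff_natDegree
  rw [hch, hcn]
  simp

end AuxLemmas


/-- Let `R(z) = z^d/(a₀z^d + ⋯ + a_d)` (`d ≥ 2`, `a_d ≠ 0`) be a
rational map whose only exceptional point is `0`, let `ζ = -a_{d-1}/(d a_d)`, and let
`β` be the order of rotational symmetries of `R` (the maximal `β` in the expression
`z^α p₀(z^β)` of the normalized polynomial to which `R` is Möbius-conjugate).  Then
every Möbius map `z ↦ z/(ζ(1-λ)z + λ)` with `λ^β = 1` preserves `J(R)`. -/
theorem mobius_symmetries_of_exceptional_point (d : ℕ) (hd : 2 ≤ d) (a : ℕ → ℂ)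
    (had : a d ≠ 0) (Q : Polynomial ℂ)
    (hQ : Q = ∑ i ∈ Finset.range (d + 1), C (a i) * X ^ (d - i))
    (R : RSphere → RSphere) (hR : R = ratSphere (X ^ d) Q)
    (hexc : ∀ w : RSphere,
      {z : RSphere | ∃ n : ℕ, R^[n] z = w}.Finite ↔ w = ((0 : ℂ) : RSphere))
    (α β : ℕ) (hβ : 1 ≤ β) (p₀ : Polynomial ℂ)
    (hmono : p₀.Monic) (hconst : p₀.coeff 0 ≠ 0)
    (hgcd : (p₀.support.erase 0).gcd id = 1)
    (hcent : (X ^ α * p₀.comp (X ^ β) : Polynomial ℂ).coeff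
      ((X ^ α * p₀.comp (X ^ β) : Polynomial ℂ).natDegree - 1) = 0)
    (hconj : ∃ A B C' D : ℂ, A * D - B * C' ≠ 0 ∧
      mobiusSphere A B C' D ∘ R = polySphere (X ^ α * p₀.comp (X ^ β)) ∘ mobiusSphere A B C' D)
    (ζ : ℂ) (hζ : ζ = -(a (d - 1)) / ((d : ℂ) * a d)) :
    ∀ lam : ℂ, lam ^ β = 1 →
      mobiusSphere 1 0 (ζ * (1 - lam)) lam '' JuliaSet R = JuliaSet R := by
  intro lam hlam
  -- basic facts
  have hβ0 : β ≠ 0 := by omega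
  have hdC : (d : ℂ) ≠ 0 := Nat.cast_ne_zero.2 (by omega)
  have hne0 : ∀ μ : ℂ, μ ^ β = 1 → μ ≠ 0 := by
    intro μ hμ h0
    rw [h0, zero_pow hβ0] at hμ
    exact one_ne_zero hμ.symm
  set p : Polynomial ℂ := X ^ α * p₀.comp (X ^ β) with hpdef
  -- the polynomial S with inv ∘ R ∘ inv = polySphere S
  set S : Polynomial ℂ := ∑ i ∈ Finset.range (d + 1), C (a i) * X ^ i with hSdef
  have hScoeff : ∀ j, j ≤ d → S.coeff j = a j := by
    intro j hj
    rw [hSdef, finset_sum_coeff, Finset.sum_eq_single j]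
    · rw [coeff_C_mul, coeff_X_pow, if_pos rfl, mul_one]
    · intro i _ hij
      rw [coeff_C_mul, coeff_X_pow, if_neg (fun h => hij h.symm), mul_zero]
    · intro h
      exact absurd (Finset.mem_range.2 (by omega)) h
  have hSd : S.natDegree = d := by
    apply le_antisymm
    · rw [hSdef]
      apply natDegree_sum_le_of_forall_le
      intro i hi
      rw [Finset.mem_range] at hi
      exact (natDegree_C_mul_X_pow_le _ _).trans (by omega)
    · exact le_natDegree_of_ne_zero (by rw [hScoeff d le_rfl]; exact had)
  have hSeval0 : S.eval 0 = a 0 := by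
    rw [← coeff_zero_eq_eval_zero, hScoeff 0 (by omega)]
  have hQeval0 : Q.eval 0 = a d := by
    rw [← coeff_zero_eq_eval_zero, hQ, finset_sum_coeff, Finset.sum_eq_single d]
    · rw [coeff_C_mul, coeff_X_pow, if_pos (by omega), mul_one]
    · intro i hi hid
      rw [Finset.mem_range] at hi
      rw [coeff_C_mul, coeff_X_pow, if_neg (by omega), mul_zero]
    · intro h
      exact absurd (Finset.mem_range.2 (by omega)) h
  have hQle : Q.natDegree ≤ d := by
    rw [hQ]
    apply natDegree_sum_le_of_forall_le
    intro i hi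
    exact (natDegree_C_mul_X_pow_le _ _).trans (by omega)
  have hkey : ∀ w : ℂ, w ≠ 0 → Q.eval w⁻¹ = (w⁻¹) ^ d * S.eval w := by
    intro w hw
    rw [hQ, hSdef, eval_finset_sum, eval_finset_sum, Finset.mul_sum]
    apply Finset.sum_congr rfl
    intro i hi
    rw [Finset.mem_range] at hi
    simp only [eval_mul, eval_C, eval_pow, eval_X]
    have h1 : (w⁻¹) ^ d = (w⁻¹) ^ (d - i) * (w⁻¹) ^ i := by
      rw [← pow_add]; congr 1; omega
    rw [h1]
    have h2 : (w⁻¹) ^ i * w ^ i = 1 := by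
      rw [← mul_pow, inv_mul_cancel₀ hw, one_pow]
    have h3 : (w⁻¹) ^ (d - i) * (w⁻¹) ^ i * (a i * w ^ i)
        = a i * (w⁻¹) ^ (d - i) * ((w⁻¹) ^ i * w ^ i) := by ring
    rw [h3, h2, mul_one]
  -- inv ∘ R ∘ inv = polySphere S
  have hIRI : ∀ x : RSphere, invSphere (R (invSphere x)) = polySphere S x := by
    intro x
    rw [hR]
    induction x using OnePoint.rec with
    | infty =>
      simp only [invSphere_infty, ratSphere_coe]
      rw [if_neg (by rw [hQeval0]; exact had)]
      have h1 : (X ^ d : Polynomial ℂ).eval 0 / Q.eval 0 = 0 := by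
        rw [eval_pow, eval_X, zero_pow (by omega : d ≠ 0), zero_div]
      rw [h1, invSphere_coe, if_pos rfl, polySphere_infty]
    | coe w =>
      by_cases hw : w = 0
      · subst hw
        rw [invSphere_coe, if_pos rfl, ratSphere_infty, polySphere_coe, hSeval0]
        by_cases h0 : a 0 = 0
        · have hQd : Q.natDegree < d := by
            have hle : Q.natDegree ≤ d - 1 := by
              rw [hQ]
              apply natDegree_sum_le_of_forall_le
              intro i hi
              rw [Finset.mem_range] at hi
              by_cases hi0 : i = 0
              · subst hi0
                rw [h0]
                simp
              · exact (natDegree_C_mul_X_pow_le _ _).trans (by omega)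
            omega
          rw [if_pos (by rw [natDegree_X_pow]; exact hQd), h0]
          simp
        · have hQcd : Q.coeff d = a 0 := by
            rw [hQ, finset_sum_coeff, Finset.sum_eq_single 0]
            · rw [coeff_C_mul, coeff_X_pow, if_pos (by omega), mul_one]
            · intro i hi hi0
              rw [Finset.mem_range] at hi
              rw [coeff_C_mul, coeff_X_pow, if_neg (by omega), mul_zero]
            · intro h
              exact absurd (Finset.mem_range.2 (by omega)) h
          have hQd : Q.natDegree = d :=
            le_antisymm hQle (le_natDegree_of_ne_zero (by rw [hQcd]; exact h0))
          rw [if_neg (by rw [natDegree_X_pow, hQd]; omega)]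
          have hlc : Q.leadingCoeff = a 0 := by
            rw [leadingCoeff, hQd, hQcd]
          rw [(monic_X_pow d).leadingCoeff, hlc, invSphere_coe,
            if_neg (one_div_ne_zero h0), one_div, inv_inv]
      · rw [invSphere_coe, if_neg hw, ratSphere_coe, polySphere_coe]
        by_cases hS0 : S.eval w = 0
        · rw [if_pos (by rw [hkey w hw, hS0, mul_zero]), invSphere_infty, hS0]
        · have hQne : Q.eval w⁻¹ ≠ 0 := by
            rw [hkey w hw]
            exact mul_ne_zero (pow_ne_zero _ (inv_ne_zero hw)) hS0
          rw [if_neg hQne]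
          have hval : (X ^ d : Polynomial ℂ).eval w⁻¹ / Q.eval w⁻¹ = (S.eval w)⁻¹ := by
            rw [eval_pow, eval_X, hkey w hw]
            rw [div_mul_eq_div_div, div_self (pow_ne_zero _ (inv_ne_zero hw)), one_div]
          rw [hval, invSphere_coe, if_neg (inv_ne_zero hS0), inv_inv]
  have hRform : ∀ y : RSphere, R y = invSphere (polySphere S (invSphere y)) := by
    intro y
    have h := hIRI (invSphere y)
    rw [invSphere_invSphere] at h
    rw [← h, invSphere_invSphere]
  -- the conjugating Möbius transformation
  obtain ⟨A, B, C', D, hdet, hM⟩ := hconj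
  have hMfun : ∀ x, mobiusSphere A B C' D (R x) = polySphere p (mobiusSphere A B C' D x) :=
    fun x => congrFun hM x
  have hMn : ∀ (n : ℕ) x, mobiusSphere A B C' D (R^[n] x)
      = (polySphere p)^[n] (mobiusSphere A B C' D x) := by
    intro n
    induction n with
    | zero => intro x; simp
    | succ n ih =>
      intro x
      rw [Function.iterate_succ_apply', Function.iterate_succ_apply', hMfun, ih]
  have hMinj := mobiusSphere_injective A B C' D hdet
  have hC : C' ≠ 0 := by
    intro hC
    have hMi : mobiusSphere A B C' D ∞ = ∞ := by simp [hC]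
    have hsub : {z : RSphere | ∃ n, R^[n] z = ∞} ⊆ {∞} := by
      rintro z ⟨n, hn⟩
      have h1 := hMn n z
      rw [hn, hMi] at h1
      have h2 : mobiusSphere A B C' D z = ∞ := by
        rw [← polySphere_iterate_eq_infty p n]
        exact h1.symm
      rw [← hMi] at h2
      exact hMinj h2
    have hfin : {z : RSphere | ∃ n, R^[n] z = ∞}.Finite := (Set.finite_singleton _).subset hsub
    exact (OnePoint.infty_ne_coe (0:ℂ)) ((hexc ∞).1 hfin)
  have hD0 : D = 0 := by
    have hMw : mobiusSphere A B C' D ((-D / C' : ℂ) : RSphere) = ∞ := by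
      rw [mobiusSphere_coe, if_pos (by field_simp; ring)]
    have hsub : {z : RSphere | ∃ n, R^[n] z = ((-D / C' : ℂ) : RSphere)}
        ⊆ {((-D / C' : ℂ) : RSphere)} := by
      rintro z ⟨n, hn⟩
      have h1 := hMn n z
      rw [hn, hMw] at h1
      have h2 : mobiusSphere A B C' D z = ∞ := by
        rw [← polySphere_iterate_eq_infty p n]
        exact h1.symm
      rw [← hMw] at h2
      exact hMinj h2
    have hfin := (Set.finite_singleton _).subset hsub
    have hw0 := (hexc _).1 hfin
    rw [OnePoint.coe_eq_coe] at hw0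
    rw [_root_.div_eq_zero_iff] at hw0
    rcases hw0 with h | h
    · exact neg_eq_zero.1 h
    · exact absurd h hC
  subst hD0
  have hB : B ≠ 0 := by
    intro h
    apply hdet
    rw [h]
    ring
  set f : ℂ := B / C' with hfdef
  set e : ℂ := A / C' with hedef
  have hf : f ≠ 0 := div_ne_zero hB hC
  have hMform : ∀ x, mobiusSphere A B C' 0 x = affineSphere f e (invSphere x) := by
    intro x
    induction x using OnePoint.rec with
    | infty =>
      rw [mobiusSphere_infty, if_neg hC, invSphere_infty, affineSphere_coe]
      rw [mul_zero, zero_add]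
    | coe z =>
      by_cases hz : z = 0
      · subst hz
        rw [mobiusSphere_coe, if_pos (by ring), invSphere_coe, if_pos rfl, affineSphere_infty]
      · rw [mobiusSphere_coe, if_neg (by simpa [hz] using mul_ne_zero hC hz),
          invSphere_coe, if_neg hz, affineSphere_coe, OnePoint.coe_eq_coe]
        rw [hfdef, hedef]
        field_simp
        ring
  have hAS : ∀ x, affineSphere f e (polySphere S x) = polySphere p (affineSphere f e x) := by
    intro x
    have h1 := hMfun (invSphere x)
    rw [hMform (R (invSphere x)), hMform (invSphere x), invSphere_invSphere, hIRI x] at h1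
    exact h1
  -- the polynomial identity
  have hpolyid : C f * S + C e = p.comp (C f * X + C e) := by
    apply Polynomial.funext
    intro z
    have h1 := hAS ((z : ℂ) : RSphere)
    simp only [polySphere_coe, affineSphere_coe, OnePoint.coe_eq_coe] at h1
    simp only [eval_add, eval_mul, eval_C, eval_comp, eval_X]
    exact h1
  have hpd : p.natDegree = d := by
    have h1 : (C f * S + C e).natDegree = d := by
      rw [natDegree_add_C, natDegree_C_mul hf, hSd]
    rw [hpolyid, natDegree_comp, natDegree_linear hf, mul_one] at h1
    exact h1
  have hpm : p.Monic := by
    have h1 : (p₀.comp (X ^ β)).Monic := by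
      have h2 := leadingCoeff_comp (p := p₀) (q := X ^ β) (by rw [natDegree_X_pow]; exact hβ0)
      show (p₀.comp (X ^ β)).leadingCoeff = 1
      rw [h2, hmono.leadingCoeff, (monic_X_pow β).leadingCoeff, one_pow, mul_one]
    exact (monic_X_pow α).mul h1
  have hcompre : p.comp (C f * X + C e) = (Polynomial.taylor e p).comp (C f * X) := by
    rw [taylor_apply, comp_assoc]
    congr 1
    simp [add_comp, X_comp, C_comp]
  have hcd : f * a d = f ^ d := by
    have h := congrArg (fun q : Polynomial ℂ => q.coeff d) hpolyid
    simp only [coeff_add, coeff_C_mul] at h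
    rw [hScoeff d le_rfl, coeff_C, if_neg (by omega), add_zero,
      hcompre, coeff_comp_C_mul_X, taylor_coeff, hasse_top p d hpd hpm] at h
    simpa using h
  have hcd1 : f * a (d - 1) = (d : ℂ) * e * f ^ (d - 1) := by
    have hcent' : p.coeff (d - 1) = 0 := by
      rw [← hpd]
      exact hcent
    have h := congrArg (fun q : Polynomial ℂ => q.coeff (d - 1)) hpolyid
    simp only [coeff_add, coeff_C_mul] at h
    rw [hScoeff (d - 1) (by omega), coeff_C, if_neg (by omega), add_zero,
      hcompre, coeff_comp_C_mul_X, taylor_coeff, hasse_next p d hpd hpm hd hcent'] at h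
    rw [h]
    simp [eval_mul, eval_C, eval_X]
  have hfd1 : f ^ (d - 1) = a d := by
    have h1 : f * a d = f * f ^ (d - 1) := by
      rw [hcd, ← pow_succ', show d - 1 + 1 = d by omega]
    exact (mul_left_cancel₀ hf h1).symm
  have he : e = -(f * ζ) := by
    have h1 : f * a (d - 1) = (d : ℂ) * e * a d := by rw [hcd1, hfd1]
    rw [hζ]
    field_simp
    linear_combination -h1
  -- the symmetry of p
  have hsym : ∀ μ z : ℂ, μ ^ β = 1 → p.eval (μ * z) = μ ^ α * p.eval z := by
    intro μ z hμ
    rw [hpdef]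
    simp only [eval_mul, eval_pow, eval_X, eval_comp]
    rw [mul_pow, mul_pow, hμ, one_mul]
    ring
  -- transfer to the sphere
  have hMobT : ∀ μ : ℂ, μ ≠ 0 → ∀ x, mobiusSphere 1 0 (ζ * (1 - μ)) μ x
      = invSphere (affineSphere μ (ζ * (1 - μ)) (invSphere x)) := by
    intro μ hμ x
    induction x using OnePoint.rec with
    | infty =>
      rw [mobiusSphere_infty, invSphere_infty, affineSphere_coe, mul_zero, zero_add]
      by_cases h : ζ * (1 - μ) = 0
      · rw [if_pos h, h, invSphere_coe, if_pos rfl]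
      · rw [if_neg h, invSphere_coe, if_neg h, one_div]
    | coe z =>
      by_cases hz : z = 0
      · subst hz
        rw [mobiusSphere_coe, if_neg (by simpa using hμ), invSphere_coe, if_pos rfl,
          affineSphere_infty, invSphere_infty]
        norm_num
      · rw [mobiusSphere_coe, invSphere_coe, if_neg hz, affineSphere_coe]
        by_cases hden : ζ * (1 - μ) * z + μ = 0
        · rw [if_pos hden, invSphere_coe, if_pos (by
            field_simp
            linear_combination hden)]
        · have h2 : μ * z⁻¹ + ζ * (1 - μ) ≠ 0 := by
            intro h0
            apply hden
            have h3 : (μ * z⁻¹ + ζ * (1 - μ)) * z = ζ * (1 - μ) * z + μ := by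
              field_simp
              ring
            rw [← h3, h0, zero_mul]
          rw [if_neg hden, invSphere_coe, if_neg h2, OnePoint.coe_eq_coe]
          refine (inv_eq_of_mul_eq_one_right ?_).symm
          have e3 : (μ * z⁻¹ + ζ * (1 - μ)) * z = ζ * (1 - μ) * z + μ := by
            field_simp
            ring
          rw [one_mul, add_zero, mul_div_assoc', e3, div_self hden]
  have hTT : ∀ (μ ν : ℂ) x, affineSphere μ (ζ * (1 - μ)) (affineSphere ν (ζ * (1 - ν)) x)
      = affineSphere (μ * ν) (ζ * (1 - μ * ν)) x := by
    intro μ ν x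
    induction x using OnePoint.rec with
    | infty => rfl
    | coe z =>
      simp only [affineSphere_coe, OnePoint.coe_eq_coe]
      ring
  have hMM : ∀ μ ν : ℂ, μ ≠ 0 → ν ≠ 0 → ∀ x,
      mobiusSphere 1 0 (ζ * (1 - μ)) μ (mobiusSphere 1 0 (ζ * (1 - ν)) ν x)
        = mobiusSphere 1 0 (ζ * (1 - μ * ν)) (μ * ν) x := by
    intro μ ν hμ hν x
    rw [hMobT μ hμ, hMobT ν hν, invSphere_invSphere, hTT,
      ← hMobT (μ * ν) (mul_ne_zero hμ hν)]
  have hMob1 : ∀ x, mobiusSphere 1 0 (ζ * (1 - 1)) 1 x = x := by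
    intro x
    induction x using OnePoint.rec with
    | infty =>
      rw [mobiusSphere_infty, if_pos (by ring)]
    | coe z =>
      rw [mobiusSphere_coe, if_neg (by
        rw [sub_self, mul_zero, zero_mul, zero_add]
        exact one_ne_zero)]
      rw [sub_self, mul_zero, zero_mul, zero_add, one_mul, add_zero, div_one]
  have hATrotA : ∀ (μ : ℂ) x, affineSphere f e (affineSphere μ (ζ * (1 - μ)) x)
      = affineSphere μ 0 (affineSphere f e x) := by
    intro μ x
    induction x using OnePoint.rec with
    | infty => rfl
    | coe z =>
      simp only [affineSphere_coe, OnePoint.coe_eq_coe]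
      rw [he]
      ring
  have hProt : ∀ μ : ℂ, μ ^ β = 1 → ∀ x, polySphere p (affineSphere μ 0 x)
      = affineSphere (μ ^ α) 0 (polySphere p x) := by
    intro μ hμ x
    induction x using OnePoint.rec with
    | infty => rfl
    | coe z =>
      simp only [affineSphere_coe, polySphere_coe, OnePoint.coe_eq_coe, add_zero]
      rw [hsym μ z hμ]
  have hainj := affineSphere_injective hf e
  have hST : ∀ μ : ℂ, μ ^ β = 1 → ∀ x, polySphere S (affineSphere μ (ζ * (1 - μ)) x)
      = affineSphere (μ ^ α) (ζ * (1 - μ ^ α)) (polySphere S x) := by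
    intro μ hμ x
    apply hainj
    rw [hAS, hATrotA, hProt μ hμ, ← hAS, ← hATrotA]
  have hRM : ∀ μ : ℂ, μ ^ β = 1 → ∀ x, R (mobiusSphere 1 0 (ζ * (1 - μ)) μ x)
      = mobiusSphere 1 0 (ζ * (1 - μ ^ α)) (μ ^ α) (R x) := by
    intro μ hμ x
    have hμ0 := hne0 μ hμ
    have hμα0 : (μ ^ α) ≠ 0 := pow_ne_zero _ hμ0
    rw [hRform, hMobT μ hμ0, invSphere_invSphere, hST μ hμ, hRform x,
      hMobT (μ ^ α) hμα0, invSphere_invSphere]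
  have hpowβ : ∀ (μ : ℂ) (k : ℕ), μ ^ β = 1 → (μ ^ k) ^ β = 1 := by
    intro μ k hμ
    rw [← pow_mul, mul_comm, pow_mul, hμ, one_pow]
  have hRMn : ∀ (n : ℕ) (μ : ℂ), μ ^ β = 1 → ∀ x,
      R^[n] (mobiusSphere 1 0 (ζ * (1 - μ)) μ x)
        = mobiusSphere 1 0 (ζ * (1 - μ ^ α ^ n)) (μ ^ α ^ n) (R^[n] x) := by
    intro n
    induction n with
    | zero =>
      intro μ hμ x
      simp
    | succ n ih =>
      intro μ hμ x
      rw [Function.iterate_succ_apply, Function.iterate_succ_apply, hRM μ hμ x,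
        ih (μ ^ α) (hpowβ μ α hμ)]
      rw [← pow_mul, ← pow_succ']
  -- the Lipschitz bound
  set L : ℝ := 2 + 4 * ‖ζ‖ ^ 2 with hLdef
  have hL : 0 < L := by positivity
  have habs1 : ∀ μ : ℂ, μ ^ β = 1 → ‖μ‖ = 1 := by
    intro μ hμ
    have h1 : ‖μ‖ ^ β = 1 := by
      rw [← norm_pow, hμ, norm_one]
    rcases lt_trichotomy (‖μ‖) 1 with h | h | h
    · exfalso
      have := pow_lt_one₀ (norm_nonneg μ) h hβ0
      rw [h1] at this
      exact lt_irrefl 1 this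
    · exact h
    · exfalso
      have := one_lt_pow₀ h hβ0
      rw [h1] at this
      exact lt_irrefl 1 this
  have hLip : ∀ μ : ℂ, μ ^ β = 1 → ∀ x y,
      chordalDist (mobiusSphere 1 0 (ζ * (1 - μ)) μ x) (mobiusSphere 1 0 (ζ * (1 - μ)) μ y)
        ≤ L * chordalDist x y := by
    intro μ hμ x y
    have habs := habs1 μ hμ
    have hdet1 : (1 : ℂ) * μ - 0 * (ζ * (1 - μ)) ≠ 0 := by
      simpa using hne0 μ hμ
    have h := mobius_lipschitz 1 0 (ζ * (1 - μ)) μ hdet1 x y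
    have habs2 : ‖(1 : ℂ) * μ - 0 * (ζ * (1 - μ))‖ = 1 := by
      rw [show (1 : ℂ) * μ - 0 * (ζ * (1 - μ)) = μ by ring, habs]
    rw [habs2, div_one] at h
    refine h.trans (mul_le_mul_of_nonneg_right ?_ (chordalDist_nonneg x y))
    have h1m : ‖1 - μ‖ ≤ 2 := by
      have := norm_add_le 1 (-μ)
      rw [← sub_eq_add_neg, norm_neg, norm_one, habs] at this
      linarith
    rw [norm_one, norm_zero, norm_mul, habs, hLdef]
    have hzn := norm_nonneg ζ
    have h1mn := norm_nonneg (1 - μ)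
    have h4 : ‖1 - μ‖ ^ 2 ≤ 4 := by nlinarith
    have h5 : ‖ζ‖ ^ 2 * ‖1 - μ‖ ^ 2 ≤ ‖ζ‖ ^ 2 * 4 :=
      mul_le_mul_of_nonneg_left h4 (sq_nonneg _)
    nlinarith [h5]
  -- continuity
  have hMobCont : ∀ μ : ℂ, μ ≠ 0 → Continuous (mobiusSphere 1 0 (ζ * (1 - μ)) μ) := by
    intro μ hμ
    have hfeq : mobiusSphere 1 0 (ζ * (1 - μ)) μ
        = invSphere ∘ affineSphere μ (ζ * (1 - μ)) ∘ invSphere := funext (fun x => hMobT μ hμ x)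
    rw [hfeq]
    exact invSphere_continuous.comp ((affineSphere_continuous hμ _).comp invSphere_continuous)
  -- invariance of the Fatou set
  have hFat : ∀ μ : ℂ, μ ^ β = 1 → ∀ x ∈ FatouSet R,
      mobiusSphere 1 0 (ζ * (1 - μ)) μ x ∈ FatouSet R := by
    intro μ hμ x hx ε hε
    obtain ⟨V, hV, hVx⟩ := hx (ε / L) (div_pos hε hL)
    have hνβ : (μ ^ (β - 1)) ^ β = 1 := hpowβ μ (β - 1) hμ
    have hν0 : μ ^ (β - 1) ≠ 0 := hne0 _ hνβ
    have hμ0 : μ ≠ 0 := hne0 μ hμ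
    have hνμ : μ ^ (β - 1) * μ = 1 := by
      rw [← pow_succ, show β - 1 + 1 = β by omega, hμ]
    have hμν : μ * μ ^ (β - 1) = 1 := by rw [mul_comm]; exact hνμ
    refine ⟨mobiusSphere 1 0 (ζ * (1 - μ ^ (β - 1))) (μ ^ (β - 1)) ⁻¹' V, ?_, ?_⟩
    · apply ContinuousAt.preimage_mem_nhds ((hMobCont _ hν0).continuousAt)
      have h1 : mobiusSphere 1 0 (ζ * (1 - μ ^ (β - 1))) (μ ^ (β - 1))
          (mobiusSphere 1 0 (ζ * (1 - μ)) μ x) = x := by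
        rw [hMM _ _ hν0 hμ0, hνμ, hMob1]
      rw [h1]
      exact hV
    · intro y hy n
      have hyV : mobiusSphere 1 0 (ζ * (1 - μ ^ (β - 1))) (μ ^ (β - 1)) y ∈ V := hy
      have hyy : mobiusSphere 1 0 (ζ * (1 - μ)) μ
          (mobiusSphere 1 0 (ζ * (1 - μ ^ (β - 1))) (μ ^ (β - 1)) y) = y := by
        rw [hMM _ _ hμ0 hν0, hμν, hMob1]
      have h1 := hVx _ hyV n
      calc chordalDist (R^[n] (mobiusSphere 1 0 (ζ * (1 - μ)) μ x)) (R^[n] y)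
          = chordalDist
              (mobiusSphere 1 0 (ζ * (1 - μ ^ α ^ n)) (μ ^ α ^ n) (R^[n] x))
              (mobiusSphere 1 0 (ζ * (1 - μ ^ α ^ n)) (μ ^ α ^ n)
                (R^[n] (mobiusSphere 1 0 (ζ * (1 - μ ^ (β - 1))) (μ ^ (β - 1)) y))) := by
            conv_lhs => rw [← hyy]
            rw [hRMn n μ hμ x, hRMn n μ hμ]
        _ ≤ L * chordalDist (R^[n] x)
              (R^[n] (mobiusSphere 1 0 (ζ * (1 - μ ^ (β - 1))) (μ ^ (β - 1)) y)) :=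
            hLip _ (hpowβ μ (α ^ n) hμ) _ _
        _ < L * (ε / L) := by
            exact mul_lt_mul_of_pos_left h1 hL
        _ = ε := by
            field_simp
  -- conclusion
  have hlβ : (lam ^ (β - 1)) ^ β = 1 := hpowβ lam (β - 1) hlam
  have hl0 : lam ≠ 0 := hne0 lam hlam
  have hn0 : lam ^ (β - 1) ≠ 0 := hne0 _ hlβ
  have hνμ : lam ^ (β - 1) * lam = 1 := by
    rw [← pow_succ, show β - 1 + 1 = β by omega, hlam]
  have hμν : lam * lam ^ (β - 1) = 1 := by rw [mul_comm]; exact hνμ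
  have hbij : Function.Bijective (mobiusSphere 1 0 (ζ * (1 - lam)) lam) := by
    refine Function.bijective_iff_has_inverse.2
      ⟨mobiusSphere 1 0 (ζ * (1 - lam ^ (β - 1))) (lam ^ (β - 1)), ?_, ?_⟩
    · intro x
      rw [hMM _ _ hn0 hl0, hνμ, hMob1]
    · intro x
      rw [hMM _ _ hl0 hn0, hμν, hMob1]
  have hFeq : mobiusSphere 1 0 (ζ * (1 - lam)) lam '' FatouSet R = FatouSet R := by
    apply Set.Subset.antisymm
    · rintro _ ⟨x, hx, rfl⟩
      exact hFat lam hlam x hx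
    · intro x hx
      refine ⟨mobiusSphere 1 0 (ζ * (1 - lam ^ (β - 1))) (lam ^ (β - 1)) x,
        hFat _ hlβ x hx, ?_⟩
      rw [hMM _ _ hl0 hn0, hμν, hMob1]
  show mobiusSphere 1 0 (ζ * (1 - lam)) lam '' JuliaSet R = JuliaSet R
  unfold JuliaSet
  rw [Set.image_compl_eq hbij, hFeq]

end
end
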